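/- arXiv:1502.00169 — 4 statements merged into one kernel-verified Lean document; each statement's English description precedes it below -/
import Mathlib

section
/- Let ε > 0 be a constant and let p = p_n ∈ (0,1) satisfy p_n·√n/(log n)² → ∞ and eventually p_n ≤ 1−ε. Then there exists a sequence g_n → 0 such that for all sufficiently large n, r_n = ⌈(1/p̂_n)·log( p̂_n·n / ((log(p_n·n))²·(1+g_n)) )⌉, where p̂_n = log(1/(1−p_n)). -/
set_option maxHeartbeats 1000000


open Filter Real Topology

noncomputable section

/-- The weight (probability) of a particular graph under the Erdős–Rényi measure `G(n,p)`. -/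
def erWeight (n : ℕ) (p : ℝ) (G : SimpleGraph (Fin n)) : ℝ :=
  p ^ G.edgeSet.ncard * (1 - p) ^ (n.choose 2 - G.edgeSet.ncard)

/-- Probability of a set of graphs under the Erdős–Rényi measure `G(n,p)`. -/
def erProb (n : ℕ) (p : ℝ) (S : Set (SimpleGraph (Fin n))) : ℝ :=
  ∑ G : SimpleGraph (Fin n), S.indicator (erWeight n p) G

/-- Expectation of a real random variable on `G(n,p)`. -/
def erExp (n : ℕ) (p : ℝ) (X : SimpleGraph (Fin n) → ℝ) : ℝ :=
  ∑ G : SimpleGraph (Fin n), erWeight n p G * X G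

/-- Variance of a real random variable on `G(n,p)`. -/
def erVar (n : ℕ) (p : ℝ) (X : SimpleGraph (Fin n) → ℝ) : ℝ :=
  erExp n p (fun G => (X G - erExp n p X) ^ 2)

/-- Probability of a set of graphs under the uniform measure `G(n,m)` on graphs with `m` edges. -/
def gnmProb (n m : ℕ) (S : Set (SimpleGraph (Fin n))) : ℝ :=
  (∑ G : SimpleGraph (Fin n),
      (S ∩ {G : SimpleGraph (Fin n) | G.edgeSet.ncard = m}).indicator 1 G) /
  (∑ G : SimpleGraph (Fin n),
      ({G : SimpleGraph (Fin n) | G.edgeSet.ncard = m} : Set (SimpleGraph (Fin n))).indicator 1 G)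

/-- `D` is a dominating set of `G`. -/
def isDomSet {V : Type*} (G : SimpleGraph V) (D : Set V) : Prop :=
  ∀ v ∉ D, ∃ u ∈ D, G.Adj u v

/-- The domination number of a finite graph. -/
def domNumber {V : Type*} [Fintype V] (G : SimpleGraph V) : ℕ :=
  sInf {k | ∃ D : Finset V, D.card = k ∧ isDomSet G ↑D}

/-- The bondage number of a finite graph. -/
def bondage {V : Type*} [Fintype V] (G : SimpleGraph V) : ℕ :=
  sInf {k | ∃ B : Finset (Sym2 V), B.card = k ∧ (↑B : Set (Sym2 V)) ⊆ G.edgeSet ∧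
    domNumber G < domNumber (G.deleteEdges ↑B)}

/-- Maximum degree of a finite graph. -/
def maxDeg {V : Type*} [Fintype V] (G : SimpleGraph V) : ℕ :=
  Finset.univ.sup fun v => (G.neighborSet v).ncard

/-- `f(n,k,p) = C(n,k)·(1−(1−p)^k)^(n−k)`, the expected number of dominating sets of size `k`. -/
def fdom (n k : ℕ) (p : ℝ) : ℝ := (n.choose k : ℝ) * (1 - (1 - p) ^ k) ^ (n - k)

/-- `r = r_n = min {k : f(n,k,p) > 1/(p n)}`. -/
def rdom (n : ℕ) (p : ℝ) : ℕ := sInf {k : ℕ | fdom n k p > 1 / (p * n)}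

/-- Number of dominating sets of cardinality `k`. -/
def numDomSets (n k : ℕ) (G : SimpleGraph (Fin n)) : ℕ :=
  {D : Finset (Fin n) | D.card = k ∧ isDomSet G ↑D}.ncard

/-- Number of dominating sets of cardinality `k` containing the vertex `v`. -/
def numDomSetsVia (n k : ℕ) (v : Fin n) (G : SimpleGraph (Fin n)) : ℕ :=
  {D : Finset (Fin n) | D.card = k ∧ v ∈ D ∧ isDomSet G ↑D}.ncard

/-- `W_i`: number of ordered pairs of dominating sets of cardinality `k` intersecting in `i`
vertices. -/
def numDomPairs (n k i : ℕ) (G : SimpleGraph (Fin n)) : ℕ :=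
  {DD : Finset (Fin n) × Finset (Fin n) | DD.1.card = k ∧ DD.2.card = k ∧
    isDomSet G ↑DD.1 ∧ isDomSet G ↑DD.2 ∧ (DD.1 ∩ DD.2).card = i}.ncard

/-- The graph `G` with the edge `uv` added (if not already present). -/
def addEdge {V : Type*} (G : SimpleGraph V) (u v : V) : SimpleGraph V :=
  G ⊔ SimpleGraph.fromEdgeSet {s(u, v)}

/-- `D̂_j(u,v)`: the number of sets `D` of cardinality `k` with `v ∈ D`, `u ∉ D`, dominating in
`G + uv`, such that `u` has exactly `j` neighbours in `D` in `G + uv`. -/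
def dhat {V : Type*} [Fintype V] (G : SimpleGraph V) (k : ℕ) (u v : V) (j : ℕ) : ℕ :=
  {D : Finset V | D.card = k ∧ v ∈ D ∧ u ∉ D ∧ isDomSet (addEdge G u v) ↑D ∧
    ((addEdge G u v).neighborSet u ∩ ↑D).ncard = j}.ncard

/-- The damage of the directed pair `(u,v)`. -/
def damage {V : Type*} [Fintype V] (G : SimpleGraph V) (k : ℕ) (u v : V) : ℝ :=
  ∑ j ∈ Finset.Icc 1 k, (dhat G k u v j : ℝ) / j

/-- The heavy damage of the directed pair `(u,v)` with threshold `L`. -/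
def heavyDamage {V : Type*} [Fintype V] (G : SimpleGraph V) (k L : ℕ) (u v : V) : ℝ :=
  ∑ j ∈ Finset.Icc 1 L, (dhat G k u v j : ℝ) / j

/-- `P(Bin(m,p) = j)`. -/
def binPMF (m : ℕ) (p : ℝ) (j : ℕ) : ℝ := (m.choose j : ℝ) * p ^ j * (1 - p) ^ (m - j)

/-- `P(Bin(m,p) < t)`. -/
def binLT (m : ℕ) (p : ℝ) (t : ℕ) : ℝ := ∑ j ∈ Finset.range t, binPMF m p j

/-- `Q_i = Σ_{j=0}^{min(i−1,L−1)} P(Bin(i−1,p)=j)·(P(Bin(r−i,p) < L−j))²`. -/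
def Qdef (r L : ℕ) (p : ℝ) (i : ℕ) : ℝ :=
  ∑ j ∈ Finset.range (min i L), binPMF (i - 1) p j * (binLT (r - i) p (L - j)) ^ 2

/-- A set of naturals is dense if `|I ∩ {1,…,n}|/n → 1`. -/
def DenseInNat (I : Set ℕ) : Prop :=
  Tendsto (fun n : ℕ => ((I ∩ Set.Icc 1 n).ncard : ℝ) / n) atTop (𝓝 1)

end

lemma pow_le_choose_mul_pow : ∀ (k n : ℕ), k ≤ n → n ^ k ≤ n.choose k * k ^ k := by
  intro k
  induction k with
  | zero => intro n _; simp
  | succ k ih =>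
    intro n hn
    obtain ⟨m, rfl⟩ : ∃ m, n = m + 1 := ⟨n - 1, by omega⟩
    have hkm : k ≤ m := by omega
    have key : (m + 1) ^ k * k ^ k ≤ m.choose k * (k+1) ^ k * k ^ k := by
      calc (m + 1) ^ k * k ^ k = ((m+1) * k) ^ k := by rw [mul_pow]
        _ ≤ (m * (k+1)) ^ k := by
            apply Nat.pow_le_pow_left; nlinarith
        _ = m ^ k * (k+1) ^ k := by rw [mul_pow]
        _ ≤ (m.choose k * k ^ k) * (k+1) ^ k := by
            exact Nat.mul_le_mul_right _ (ih m hkm)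
        _ = m.choose k * (k+1) ^ k * k ^ k := by ring
    have key2 : (m + 1) ^ k ≤ m.choose k * (k+1) ^ k := by
      rcases Nat.eq_zero_or_pos k with hk | hk
      · subst hk; simp
      · exact Nat.le_of_mul_le_mul_right key (Nat.pow_pos hk)
    calc (m+1) ^ (k+1) = (m+1) * (m+1)^k := by ring
      _ ≤ (m+1) * (m.choose k * (k+1)^k) := Nat.mul_le_mul_left _ key2
      _ = ((m+1) * m.choose k) * (k+1)^k := by ring
      _ = ((m+1).choose (k+1) * (k+1)) * (k+1)^k := by rw [Nat.add_one_mul_choose_eq]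
      _ = (m+1).choose (k+1) * (k+1)^(k+1) := by ring

/-- real version: `exp(k (log n - log k)) ≤ C(n,k)`. -/
lemma exp_le_choose (n k : ℕ) (hk : 1 ≤ k) (hkn : k ≤ n) :
    Real.exp (k * (Real.log n - Real.log k)) ≤ (n.choose k : ℝ) := by
  have hk0 : (0:ℝ) < k := by exact_mod_cast hk
  have hn0 : (0:ℝ) < n := by exact_mod_cast Nat.lt_of_lt_of_le (by omega) hkn
  have h1 : Real.exp (k * (Real.log n - Real.log k)) = (n:ℝ)^k / (k:ℝ)^k := by
    rw [Real.exp_nat_mul, Real.exp_sub, Real.exp_log hn0, Real.exp_log hk0, div_pow]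
  rw [h1, div_le_iff₀ (by positivity)]
  have := pow_le_choose_mul_pow k n hkn
  exact_mod_cast this

/-- real version: `C(n,k) ≤ exp(k (1 + log n - log k))`. -/
lemma choose_le_exp (n k : ℕ) (hk : 1 ≤ k) (hn : 1 ≤ n) :
    (n.choose k : ℝ) ≤ Real.exp (k * (1 + Real.log n - Real.log k)) := by
  have hk0 : (0:ℝ) < k := by exact_mod_cast hk
  have hn0 : (0:ℝ) < n := by exact_mod_cast hn
  have h1 : Real.exp (k * (1 + Real.log n - Real.log k)) = Real.exp k * (n:ℝ)^k / (k:ℝ)^k := by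
    have : (k:ℝ) * (1 + Real.log n - Real.log k) = k * 1 + k * Real.log n - k * Real.log k := by ring
    rw [this, Real.exp_sub, Real.exp_add, Real.exp_nat_mul (Real.log n), Real.exp_nat_mul (Real.log k),
      Real.exp_log hn0, Real.exp_log hk0, mul_one]
  rw [h1]
  have h2 : (n.choose k : ℝ) ≤ (n:ℝ)^k / (k.factorial : ℝ) := by
    exact_mod_cast Nat.choose_le_pow_div k n
  refine h2.trans ?_
  rw [div_le_div_iff₀ (by positivity) (by positivity)]
  have h3 : (k:ℝ)^k / (k.factorial : ℝ) ≤ Real.exp k := Real.pow_div_factorial_le_exp _ hk0.le k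
  rw [div_le_iff₀ (by positivity)] at h3
  calc (n:ℝ)^k * (k:ℝ)^k = (k:ℝ)^k * (n:ℝ)^k := by ring
    _ ≤ (Real.exp k * (k.factorial:ℝ)) * (n:ℝ)^k := by
        exact mul_le_mul_of_nonneg_right h3 (by positivity)
    _ = Real.exp k * (n:ℝ)^k * (k.factorial:ℝ) := by ring

/-- monotonicity of `t ↦ t(1 + log N - log t)` for `0 < t ≤ N`. -/
lemma phi_mono {a b N : ℝ} (ha : 0 < a) (hab : a ≤ b) (hbN : b ≤ N) :
    a * (1 + Real.log N - Real.log a) ≤ b * (1 + Real.log N - Real.log b) := by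
  have hb : 0 < b := lt_of_lt_of_le ha hab
  have h1 : Real.log b - Real.log a ≤ b / a - 1 := by
    have := Real.log_le_sub_one_of_pos (show 0 < b / a by positivity)
    rwa [Real.log_div (ne_of_gt hb) (ne_of_gt ha)] at this
  have h2 : a * (Real.log b - Real.log a) ≤ b - a := by
    have := mul_le_mul_of_nonneg_left h1 ha.le
    calc a * (Real.log b - Real.log a) ≤ a * (b / a - 1) := this
      _ = b - a := by field_simp
  have h3 : Real.log b ≤ Real.log N := Real.log_le_log hb hbN
  nlinarith [sub_nonneg.mpr hab]

lemma keystone (ε η : ℝ) (n : ℕ) (p : ℝ)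
    (hε : 0 < ε) (hη0 : 0 < η) (hη2 : η ≤ 1/2)
    (hp0 : 0 < p) (hp1 : p ≤ 1 - ε)
    (hN : 16 ≤ (n:ℝ))
    (hHP : Real.sqrt n * Real.log n ^ 2 ≤ p * n)
    (hb1 : 32 * max (Real.log ε⁻¹) 1 / η ≤ Real.log n)
    (hb2 : 16 / η ≤ Real.sqrt n)
    (hb3 : 2 * Real.exp 1 ≤ Real.log n)
    (hb5 : 32 / η ≤ Real.sqrt (Real.log n / 2)) :
    1 ≤ rdom n p ∧
    (n:ℝ) * (1 - p) ^ (rdom n p) * Real.log (1/(1-p)) < (1+η) * Real.log (p * n) ^ 2 ∧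
    (1-η) * Real.log (p * n) ^ 2 < (n:ℝ) * (1 - p) ^ (rdom n p - 1) * Real.log (1/(1-p)) := by
  have hN0 : (0:ℝ) < n := by linarith
  have hq0 : 0 < 1 - p := by linarith
  have hq1 : 1 - p < 1 := by linarith
  have hqε : ε ≤ 1 - p := by linarith
  have hηsq : η * η ≤ η / 2 := by nlinarith
  set ph := Real.log (1/(1-p)) with hphdef
  have hph : ph = - Real.log (1-p) := by rw [hphdef, one_div, Real.log_inv]
  have hph0 : 0 < ph := by
    have := Real.log_neg hq0 hq1
    rw [hph]; linarith
  have hphp : p ≤ ph := by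
    have := Real.log_le_sub_one_of_pos hq0
    rw [hph]; linarith
  set Cc := max (Real.log ε⁻¹) 1 with hCcdef
  have hCc1 : 1 ≤ Cc := le_max_right _ _
  have hphC : ph ≤ Cc := by
    have h1 : Real.log ε ≤ Real.log (1-p) := Real.log_le_log hε hqε
    have h2 : ph ≤ Real.log ε⁻¹ := by rw [hph, Real.log_inv]; linarith
    exact h2.trans (le_max_left _ _)
  set ℓ := Real.log n with hℓdef
  have hsq : Real.sqrt n * Real.sqrt n = (n:ℝ) := Real.mul_self_sqrt hN0.le
  have hsq0 : (0:ℝ) ≤ Real.sqrt n := Real.sqrt_nonneg _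
  have hsq4 : 4 ≤ Real.sqrt n := by
    have h := Real.sqrt_le_sqrt hN
    rwa [show (16:ℝ) = 4^2 by norm_num, Real.sqrt_sq (by norm_num)] at h
  have hexp1 : (2:ℝ) ≤ Real.exp 1 := by have := Real.add_one_le_exp 1; linarith
  have hℓ4 : 4 ≤ ℓ := by linarith
  have hp1' : p ≤ 1 := by linarith
  have hpN0 : 0 < p * n := by positivity
  have hℓsq : 16 ≤ ℓ^2 := by
    have := mul_le_mul hℓ4 hℓ4 (by norm_num) (by linarith)
    rw [sq]; linarith
  have hpNbig : Real.sqrt n ≤ p * n := by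
    have h1 : (1:ℝ) ≤ ℓ^2 := by linarith
    have h2 : Real.sqrt n * 1 ≤ Real.sqrt n * ℓ^2 := mul_le_mul_of_nonneg_left h1 hsq0
    linarith
  set L := Real.log (p * n) with hLdef
  have hLup : L ≤ ℓ := by
    have h1 : p * (n:ℝ) ≤ 1 * n := mul_le_mul_of_nonneg_right hp1' hN0.le
    exact Real.log_le_log hpN0 (by linarith)
  have hLlo : ℓ/2 ≤ L := by
    have h1 : Real.log (Real.sqrt n) ≤ L := Real.log_le_log (by positivity) hpNbig
    rwa [Real.log_sqrt hN0.le] at h1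
  have hL2 : 2 ≤ L := by linarith
  have hL0 : 0 < L := by linarith
  have hLsq4 : 4 ≤ L^2 := by
    have := mul_le_mul hL2 hL2 (by norm_num) hL0.le
    rw [sq]; linarith
  have hℓL2 : L^2 ≤ ℓ^2 := by
    rw [sq, sq]; exact mul_le_mul hLup hLup hL0.le (by linarith)
  set M := Real.log (ph * n) with hMdef
  have hphN0 : 0 < ph * n := by positivity
  have hML : L ≤ M := by
    have h1 : p * (n:ℝ) ≤ ph * n := mul_le_mul_of_nonneg_right hphp hN0.le
    exact Real.log_le_log hpN0 h1
  have hM0 : 0 < M := lt_of_lt_of_le hL0 hML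
  have hphpe : ph ≤ p / ε := by
    have h2 := Real.log_le_sub_one_of_pos (show 0 < 1/(1-p) by positivity)
    have h3 : ph ≤ p / (1-p) := by
      rw [hphdef]
      have h4 : 1/(1-p) - 1 = p/(1-p) := by field_simp; ring
      linarith
    refine h3.trans ?_
    rw [div_le_div_iff₀ hq0 hε]
    exact mul_le_mul_of_nonneg_left hqε hp0.le
  have hMU : M ≤ L + Cc := by
    have h1 : ph * n ≤ (p * n) * ε⁻¹ := by
      have h0 : ph * (n:ℝ) ≤ (p/ε) * n := mul_le_mul_of_nonneg_right hphpe hN0.le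
      have h0' : (p/ε) * (n:ℝ) = (p * n) * ε⁻¹ := by field_simp
      linarith
    have h2 : M ≤ Real.log ((p*n) * ε⁻¹) := Real.log_le_log hphN0 h1
    rw [Real.log_mul (ne_of_gt hpN0) (by positivity)] at h2
    have h3 : Real.log ε⁻¹ ≤ Cc := le_max_left _ _
    linarith
  have hCcℓ : Cc ≤ η/32 * ℓ := by
    rw [div_le_iff₀ hη0] at hb1
    linarith
  have hCcL : Cc ≤ η/16 * L := by
    have h1 : η/32 * ℓ ≤ η/32 * (2*L) := by
      apply mul_le_mul_of_nonneg_left (by linarith) (by positivity)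
    linarith
  have hM16 : M ≤ (1 + η/16) * L := by
    have e : (1+η/16)*L = L + η/16*L := by ring
    linarith
  have hM2L : M ≤ 2 * L := by
    have h1 : η/16*L ≤ 1*L := mul_le_mul_of_nonneg_right (by linarith) hL0.le
    have e : (1+η/16)*L = L + η/16*L := by ring
    linarith
  have hM2ℓ : M ≤ 2 * ℓ := by linarith
  set K := M / ph with hKdef
  have hK0 : 0 < K := by positivity
  have hphL : ph ≤ η/4*L := by
    have h1 : η/16*L ≤ η/4*L := mul_le_mul_of_nonneg_right (by linarith) hL0.le
    linarith
  have hK1 : 1 ≤ K := by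
    rw [hKdef, le_div_iff₀ hph0]
    have : η/4*L ≤ 1*L := mul_le_mul_of_nonneg_right (by linarith) hL0.le
    linarith
  have h16η : 16 ≤ η * Real.sqrt n := by
    rw [div_le_iff₀ hη0] at hb2; linarith
  have hKN : K ≤ η/8 * n := by
    rw [hKdef, div_le_iff₀ hph0]
    have h2 : η/8 * (Real.sqrt n * ℓ^2) ≤ η/8 * (p*n) :=
      mul_le_mul_of_nonneg_left hHP (by positivity)
    have e1 : 2 ≤ η * Real.sqrt n/8 := by linarith
    have e2 : 2 * ℓ^2 ≤ (η * Real.sqrt n/8) * ℓ^2 :=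
      mul_le_mul_of_nonneg_right e1 (sq_nonneg ℓ)
    have e3 : ℓ ≤ ℓ^2 := by
      have := mul_le_mul_of_nonneg_left (show (1:ℝ) ≤ ℓ by linarith) (show (0:ℝ) ≤ ℓ by linarith)
      rw [sq]; linarith
    have e4 : (η * Real.sqrt n/8) * ℓ^2 = η/8 * (Real.sqrt n * ℓ^2) := by ring
    have h4 : η/8 * (p*n) ≤ η/8*((n:ℝ)*ph) := by
      have := mul_le_mul_of_nonneg_right hphp hN0.le
      have e5 : ph * (n:ℝ) = (n:ℝ) * ph := by ring
      apply mul_le_mul_of_nonneg_left (by linarith) (by positivity)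
    have e6 : η/8*((n:ℝ)*ph) = η/8*(n:ℝ)*ph := by ring
    linarith
  have hη16N : η/8 * (n:ℝ) ≤ (n:ℝ)/16 := by
    have : η/8 * (n:ℝ) ≤ (1/16) * n := mul_le_mul_of_nonneg_right (by linarith) hN0.le
    linarith
  have hKn : K ≤ (n:ℝ) := by linarith
  have hfd0 : fdom n 0 p = 0 := by
    have hn0 : n ≠ 0 := by
      intro h; rw [h] at hN; norm_num at hN
    simp [fdom, zero_pow hn0]
  -- E1 : upper estimate
  have E1 : ∀ k : ℕ, (1+η) * L^2 ≤ (n:ℝ) * (1-p)^k * ph → fdom n k p ≤ 1 / (p * n) := by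
    intro k hk
    rcases Nat.eq_zero_or_pos k with rfl | hk1
    · rw [hfd0]; positivity
    · have hk0 : (0:ℝ) < k := by exact_mod_cast hk1
      have hqk0 : (0:ℝ) < (1-p)^k := pow_pos hq0 k
      have hgeq : 1/(ph*n) ≤ (1-p)^k := by
        rw [div_le_iff₀ hphN0]
        have e1 : L^2 ≤ (1+η)*L^2 := by
          have := mul_nonneg hη0.le (sq_nonneg L)
          have e : (1+η)*L^2 = L^2 + η*L^2 := by ring
          linarith
        have e2 : (n:ℝ) * (1-p)^k * ph = (1-p)^k * (ph * n) := by ring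
        linarith
      have hkM : (k:ℝ) * ph ≤ M := by
        have h1 : Real.log (1/(ph*(n:ℝ))) ≤ Real.log ((1-p)^k) :=
          Real.log_le_log (by positivity) hgeq
        rw [one_div, Real.log_inv, Real.log_pow] at h1
        have h2 : Real.log (1-p) = -ph := by rw [hph]; ring
        rw [h2] at h1
        have h3 : -M ≤ (k:ℝ) * (-ph) := h1
        linarith
      have hkK : (k:ℝ) ≤ K := by rw [hKdef, le_div_iff₀ hph0]; exact hkM
      have hkNr : (k:ℝ) ≤ η/8 * n := hkK.trans hKN
      have hkn : k < n := by
        have : (k:ℝ) < (n:ℝ) := by linarith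
        exact_mod_cast this
      have hC := choose_le_exp n k hk1 (by omega)
      have hφ : (k:ℝ) * (1 + ℓ - Real.log k) ≤ K * (1 + ℓ - Real.log K) :=
        phi_mono hk0 hkK hKn
      have hlogK : Real.log K = Real.log M - Real.log ph :=
        Real.log_div (ne_of_gt hM0) (ne_of_gt hph0)
      have hlogM1 : 1 ≤ Real.log M := by
        have h1 : Real.exp 1 ≤ M := by linarith
        have h2 := Real.log_le_log (Real.exp_pos 1) h1
        rwa [Real.log_exp] at h2
      have hMsum : 1 + ℓ - Real.log K = 1 + M - Real.log M := by
        rw [hlogK, hMdef, Real.log_mul (ne_of_gt hph0) (ne_of_gt hN0)]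
        rw [hℓdef]; ring
      have hφK : K * (1 + ℓ - Real.log K) ≤ M^2 / ph := by
        rw [hMsum]
        have h1 : 1 + M - Real.log M ≤ M := by linarith
        have h2 : K * (1 + M - Real.log M) ≤ K * M := mul_le_mul_of_nonneg_left h1 hK0.le
        have h3 : K * M = M^2/ph := by rw [hKdef]; field_simp
        linarith
      have hM2 : M^2 ≤ (1+η/4) * L^2 := by
        have e1 : M*M ≤ ((1+η/16)*L)*((1+η/16)*L) :=
          mul_le_mul hM16 hM16 hM0.le (by positivity)
        have e2 : ((1+η/16)*L)*((1+η/16)*L) = (1 + η/8 + η*η/256)*(L*L) := by ring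
        have e3 : η*η*(L*L) ≤ (η/2)*(L*L) :=
          mul_le_mul_of_nonneg_right hηsq (by positivity)
        have e4 : M^2 = M*M := sq M
        have e5 : (1+η/4)*L^2 = L*L + (η/4)*(L*L) := by rw [sq]; ring
        have e6 : (1 + η/8 + η*η/256)*(L*L) = L*L + (η/8)*(L*L) + (η*η*(L*L))/256 := by ring
        have e8 : 0 ≤ η*(L*L) := mul_nonneg hη0.le (mul_nonneg hL0.le hL0.le)
        linarith
      have hqk1 : (1-p)^k ≤ 1 := pow_le_one₀ hq0.le (by linarith)
      have hbase : 1 - (1-p)^k ≤ Real.exp (-(1-p)^k) := by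
        have := Real.add_one_le_exp (-(1-p)^k); linarith
      have hpow : (1 - (1-p)^k)^(n-k) ≤ Real.exp (-(((n:ℝ) - k) * (1-p)^k)) := by
        calc (1 - (1-p)^k)^(n-k) ≤ (Real.exp (-(1-p)^k))^(n-k) :=
              pow_le_pow_left₀ (by linarith) hbase _
          _ = Real.exp (((n-k:ℕ):ℝ) * (-(1-p)^k)) := (Real.exp_nat_mul _ _).symm
          _ = Real.exp (-(((n:ℝ) - k) * (1-p)^k)) := by
              rw [Nat.cast_sub (le_of_lt hkn)]; ring_nf
      have hmain : fdom n k p ≤ Real.exp ((k:ℝ) * (1 + ℓ - Real.log k) - ((n:ℝ)-k) * (1-p)^k) := by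
        rw [fdom, Real.exp_sub]
        have hpownn : (0:ℝ) ≤ (1 - (1-p)^k)^(n-k) := pow_nonneg (by linarith) _
        calc (n.choose k : ℝ) * (1 - (1-p)^k)^(n-k)
            ≤ Real.exp ((k:ℝ) * (1 + ℓ - Real.log k)) * Real.exp (-(((n:ℝ) - k) * (1-p)^k)) :=
              mul_le_mul hC hpow hpownn (Real.exp_pos _).le
          _ = Real.exp ((k:ℝ) * (1 + ℓ - Real.log k)) / Real.exp (((n:ℝ) - k) * (1-p)^k) := by
              rw [Real.exp_neg]; ring
      have hX0 : (0:ℝ) ≤ L^2/ph := by positivity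
      have hup1 : (k:ℝ) * (1 + ℓ - Real.log k) ≤ (1+η/4)*(L^2/ph) := by
        have h2 : M^2/ph ≤ ((1+η/4)*L^2)/ph := by gcongr
        have h3 : ((1+η/4)*L^2)/ph = (1+η/4)*(L^2/ph) := by ring
        linarith [hφ.trans hφK]
      have h2 : (1+η)*L^2/ph ≤ (n:ℝ)*(1-p)^k := by
        rw [div_le_iff₀ hph0]; exact hk
      have h3 : (1-η/8)*((n:ℝ)*(1-p)^k) ≤ ((n:ℝ)-k)*(1-p)^k := by
        have e1 : (1-η/8)*(n:ℝ) ≤ (n:ℝ)-k := by linarith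
        have := mul_le_mul_of_nonneg_right e1 hqk0.le
        have e2 : (1-η/8)*(n:ℝ)*(1-p)^k = (1-η/8)*((n:ℝ)*(1-p)^k) := by ring
        linarith
      have hdown : (1+η/2)*(L^2/ph) ≤ ((n:ℝ)-k)*(1-p)^k := by
        have coefe : (1-η/8)*(1+η) = 1 + η - η/8 - η*η/8 := by ring
        have coef : 1+η/2 ≤ (1-η/8)*(1+η) := by linarith
        have c1 : (1+η/2)*(L^2/ph) ≤ ((1-η/8)*(1+η))*(L^2/ph) :=
          mul_le_mul_of_nonneg_right coef hX0
        have c3 : (1-η/8)*((1+η)*L^2/ph) ≤ (1-η/8)*((n:ℝ)*(1-p)^k) :=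
          mul_le_mul_of_nonneg_left h2 (by linarith)
        have c5 : ((1-η/8)*(1+η))*(L^2/ph) = (1-η/8)*((1+η)*L^2/ph) := by ring
        linarith
      have h5 : L ≤ (η/4)*(L^2/ph) := by
        have c6 : (η/4)*(L^2/ph) = ((η/4)*L^2)/ph := by ring
        rw [c6, le_div_iff₀ hph0]
        have := mul_le_mul_of_nonneg_left hphL hL0.le
        have c7 : L*(η/4*L) = η/4*L^2 := by ring
        linarith
      have hexpo : (k:ℝ) * (1 + ℓ - Real.log k) - ((n:ℝ)-k) * (1-p)^k ≤ -L := by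
        have c7 : (1+η/4)*(L^2/ph) - (1+η/2)*(L^2/ph) = -((η/4)*(L^2/ph)) := by ring
        linarith
      have hEL : Real.exp (-L) = 1/(p*n) := by
        rw [Real.exp_neg, hLdef, Real.exp_log hpN0, one_div]
      rw [← hEL]
      exact hmain.trans (Real.exp_le_exp.mpr hexpo)
  -- E2 : lower estimate at the threshold value
  have hS2pos : (0:ℝ) < (1-η)*L^2/((n:ℝ)*ph) := by
    have h1 : (0:ℝ) < 1 - η := by linarith
    positivity
  have hS2ne : {k : ℕ | (n:ℝ) * (1-p)^k * ph ≤ (1-η)*L^2}.Nonempty := by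
    obtain ⟨k, hkk⟩ := exists_pow_lt_of_lt_one hS2pos hq1
    refine ⟨k, ?_⟩
    have h1 := (lt_div_iff₀ (by positivity : (0:ℝ) < (n:ℝ)*ph)).mp hkk
    simp only [Set.mem_setOf_eq]
    have e1 : (1-p)^k * ((n:ℝ)*ph) = (n:ℝ)*(1-p)^k*ph := by ring
    linarith
  set k₂ := sInf {k : ℕ | (n:ℝ) * (1-p)^k * ph ≤ (1-η)*L^2} with hk₂def
  have hk₂mem : (n:ℝ) * (1-p)^k₂ * ph ≤ (1-η)*L^2 := Nat.sInf_mem hS2ne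
  have hnph : (n:ℝ)*p ≤ (n:ℝ)*ph := mul_le_mul_of_nonneg_left hphp hN0.le
  have hk₂1 : 1 ≤ k₂ := by
    by_contra h
    push_neg at h
    have hk0 : k₂ = 0 := by omega
    rw [hk0] at hk₂mem
    simp only [pow_zero, mul_one] at hk₂mem
    -- hk₂mem : ↑n * ph ≤ (1-η)*L^2 ; but n*ph ≥ p*n ≥ √n ℓ² ≥ 4ℓ² > ℓ² ≥ L² ≥ (1-η)L²
    have c2 : 4*ℓ^2 ≤ Real.sqrt n * ℓ^2 := mul_le_mul_of_nonneg_right hsq4 (sq_nonneg ℓ)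
    have c3 : (1-η)*L^2 ≤ 1*L^2 := mul_le_mul_of_nonneg_right (by linarith) (sq_nonneg L)
    linarith
  have hk₂prev : (1-η)*L^2 < (n:ℝ) * (1-p)^(k₂-1) * ph := by
    have hlt : k₂ - 1 < sInf {k : ℕ | (n:ℝ) * (1-p)^k * ph ≤ (1-η)*L^2} := by
      rw [← hk₂def]; omega
    have h := Nat.notMem_of_lt_sInf hlt
    simp only [Set.mem_setOf_eq, not_le] at h
    exact h
  have hqk₂0 : (0:ℝ) < (1-p)^(k₂-1) := pow_pos hq0 _
  have hqk₂0' : (0:ℝ) < (1-p)^k₂ := pow_pos hq0 _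
  have hcast₂ : ((k₂ - 1 : ℕ):ℝ) = (k₂:ℝ) - 1 := by
    rw [Nat.cast_sub hk₂1]; norm_num
  have hhalfL : (1:ℝ) ≤ (1-η)*L^2 := by
    have : (1/2)*L^2 ≤ (1-η)*L^2 := mul_le_mul_of_nonneg_right (by linarith) (sq_nonneg L)
    linarith
  have hk₂M : ((k₂:ℝ) - 1) * ph ≤ M := by
    have h1 : 1/(ph*(n:ℝ)) ≤ (1-p)^(k₂-1) := by
      rw [div_le_iff₀ hphN0]
      have e1 : (1-p)^(k₂-1) * (ph*(n:ℝ)) = (n:ℝ)*(1-p)^(k₂-1)*ph := by ring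
      linarith
    have h2 : Real.log (1/(ph*(n:ℝ))) ≤ Real.log ((1-p)^(k₂-1)) :=
      Real.log_le_log (by positivity) h1
    rw [one_div, Real.log_inv, Real.log_pow] at h2
    have h3 : Real.log (1-p) = -ph := by rw [hph]; ring
    rw [h3, hcast₂] at h2
    have e : ((k₂:ℝ)-1) * (-ph) = -(((k₂:ℝ)-1)*ph) := by ring
    rw [e] at h2
    linarith
  have hk₂2K : (k₂:ℝ) ≤ 2*K := by
    have h1 : (k₂:ℝ) - 1 ≤ K := by rw [hKdef, le_div_iff₀ hph0]; exact hk₂M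
    linarith
  have hk₂n : k₂ ≤ n := by
    have : (k₂:ℝ) ≤ (n:ℝ) := by linarith
    exact_mod_cast this
  have hk₂0 : (0:ℝ) < k₂ := by exact_mod_cast hk₂1
  -- log L is small
  have hsqL : Real.sqrt L * Real.sqrt L = L := Real.mul_self_sqrt hL0.le
  have hsqL0 : (0:ℝ) ≤ Real.sqrt L := Real.sqrt_nonneg L
  have h32L : 32/η ≤ Real.sqrt L := by
    refine hb5.trans (Real.sqrt_le_sqrt ?_)
    linarith
  have h32L' : 32 ≤ η * Real.sqrt L := by
    rw [div_le_iff₀ hη0] at h32L; linarith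
  have hsqL1 : 1 ≤ Real.sqrt L := by
    have := mul_le_mul_of_nonneg_right hη2 hsqL0
    linarith
  have hsqLL : Real.sqrt L ≤ L := by
    have h := mul_le_mul_of_nonneg_left hsqL1 hsqL0
    rw [mul_one, hsqL] at h
    exact h
  have h32ηL : 32 * Real.sqrt L ≤ η * L := by
    have h := mul_le_mul_of_nonneg_right h32L' hsqL0
    rw [mul_assoc, hsqL] at h
    exact h
  have hlogLsqrt : Real.log L ≤ 2 * Real.sqrt L := by
    have h1 : Real.log (Real.sqrt L) ≤ Real.sqrt L - 1 :=
      Real.log_le_sub_one_of_pos (by positivity)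
    have h2 : Real.log (Real.sqrt L) = Real.log L / 2 := Real.log_sqrt hL0.le
    linarith
  have h2logL : 2 * Real.log L ≤ η/8 * L := by linarith
  have hlogL0 : 0 ≤ Real.log L := Real.log_nonneg (by linarith)
  have hk₂lo : (1 - η/8)*L/ph ≤ (k₂:ℝ) := by
    have h1 : (1-p)^k₂ ≤ L^2/(ph*(n:ℝ)) := by
      rw [le_div_iff₀ hphN0]
      have e1 : (1-p)^k₂ * (ph*(n:ℝ)) = (n:ℝ)*(1-p)^k₂*ph := by ring
      have e2 : (1-η)*L^2 ≤ 1*L^2 := mul_le_mul_of_nonneg_right (by linarith) (sq_nonneg L)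
      linarith
    have h2 : Real.log ((1-p)^k₂) ≤ Real.log (L^2/(ph*(n:ℝ))) :=
      Real.log_le_log hqk₂0' h1
    rw [Real.log_pow, Real.log_div (by positivity) (ne_of_gt hphN0)] at h2
    have h3 : Real.log (L^2) = 2 * Real.log L := by
      rw [sq, Real.log_mul (ne_of_gt hL0) (ne_of_gt hL0)]; ring
    have h4 : Real.log (1-p) = -ph := by rw [hph]; ring
    rw [h3, h4] at h2
    rw [div_le_iff₀ hph0]
    have e : (k₂:ℝ) * (-ph) = -((k₂:ℝ)*ph) := by ring
    rw [e] at h2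
    have e2 : (1-η/8)*L = L - η/8*L := by ring
    linarith
  have hlogk₂ : (1-η/8)*L ≤ ℓ - Real.log k₂ := by
    have h1 : Real.log k₂ ≤ Real.log (2*M/ph) := by
      apply Real.log_le_log hk₂0
      rw [hKdef] at hk₂2K
      have : 2*(M/ph) = 2*M/ph := by ring
      linarith
    have h2 : Real.log (2*M/ph) = Real.log (2*M) - Real.log ph :=
      Real.log_div (by positivity) (ne_of_gt hph0)
    have h3 : ℓ + Real.log ph = M := by
      rw [hMdef, Real.log_mul (ne_of_gt hph0) (ne_of_gt hN0), hℓdef]; ring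
    have hlog4 : Real.log (4:ℝ) ≤ 2 := by
      rw [show (4:ℝ) = 2^2 by norm_num, Real.log_pow]
      have := Real.log_le_sub_one_of_pos (show (0:ℝ) < 2 by norm_num)
      push_cast
      linarith
    have h4 : Real.log (2*M) ≤ Real.log (4*L) := by
      apply Real.log_le_log (by positivity)
      linarith
    have h5 : Real.log (4*L) = Real.log 4 + Real.log L := by
      rw [Real.log_mul (by norm_num) (ne_of_gt hL0)]
    have c1 : 2 ≤ η/16 * L := by
      have d1 : (32:ℝ)/η ≤ L := h32L.trans hsqLL
      rw [div_le_iff₀ hη0] at d1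
      linarith
    have c2 : 2 * Real.sqrt L ≤ η/16 * L := by linarith
    have h6 : Real.log (2*M) ≤ η/8 * L := by
      have := hlogLsqrt
      linarith
    linarith
  have hX0 : (0:ℝ) ≤ L^2/ph := by positivity
  have hCk₂ : Real.exp ((1-η/4)*(L^2/ph)) ≤ (n.choose k₂ : ℝ) := by
    refine le_trans ?_ (exp_le_choose n k₂ hk₂1 hk₂n)
    apply Real.exp_le_exp.mpr
    have hb0 : (0:ℝ) ≤ (1-η/8)*L := mul_nonneg (by linarith) hL0.le
    have ha0 : (0:ℝ) ≤ (1-η/8)*L/ph := div_nonneg hb0 hph0.le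
    have hmul : ((1-η/8)*L/ph) * ((1-η/8)*L) ≤ (k₂:ℝ) * (ℓ - Real.log k₂) :=
      mul_le_mul hk₂lo hlogk₂ hb0 (le_of_lt hk₂0)
    have hring : ((1-η/8)*L/ph) * ((1-η/8)*L) = ((1-η/8)*(1-η/8))*(L^2/ph) := by ring
    have hcoef : (1-η/4)*(L^2/ph) ≤ ((1-η/8)*(1-η/8))*(L^2/ph) := by
      apply mul_le_mul_of_nonneg_right ?_ hX0
      have h := mul_nonneg hη0.le hη0.le
      have e : (1-η/8)*(1-η/8) = 1 - η/4 + η*η/64 := by ring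
      linarith
    rw [← hℓdef]
    linarith
  have hqk₂sqn : (1-p)^k₂ * Real.sqrt n ≤ 1 := by
    have s1 : Real.sqrt n * L^2 ≤ Real.sqrt n * ℓ^2 := mul_le_mul_of_nonneg_left hℓL2 hsq0
    have s2 : Real.sqrt n * L^2 ≤ (n:ℝ)*ph := by linarith
    have h1 : (1-p)^k₂ * (Real.sqrt n * L^2) ≤ (1-p)^k₂ * ((n:ℝ)*ph) :=
      mul_le_mul_of_nonneg_left s2 hqk₂0'.le
    have h2 : (1-p)^k₂ * ((n:ℝ)*ph) ≤ (1-η)*L^2 := by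
      have e1 : (1-p)^k₂ * ((n:ℝ)*ph) = (n:ℝ)*(1-p)^k₂*ph := by ring
      linarith
    have e2 : (1-η)*L^2 ≤ 1*L^2 := mul_le_mul_of_nonneg_right (by linarith) (sq_nonneg L)
    have hL2pos : (0:ℝ) < L^2 := by positivity
    have h3 : (1-p)^k₂ * Real.sqrt n * L^2 ≤ 1 * L^2 := by
      have e3 : (1-p)^k₂ * Real.sqrt n * L^2 = (1-p)^k₂ * (Real.sqrt n * L^2) := by ring
      linarith
    exact le_of_mul_le_mul_right (by linarith) hL2pos
  have hqk₂small : (1-p)^k₂ ≤ η/4 := by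
    have hsqpos : (0:ℝ) < Real.sqrt n := by linarith
    have h4 : (1-p)^k₂ ≤ 1/Real.sqrt n := by
      rw [le_div_iff₀ hsqpos]; exact hqk₂sqn
    have h5 : 1/Real.sqrt n ≤ η/16 := by
      rw [div_le_iff₀ hsqpos]
      have e : η/16 * Real.sqrt n = (η * Real.sqrt n)/16 := by ring
      linarith
    linarith
  have hxhalf : (1-p)^k₂ ≤ 1/2 := by linarith
  have hpow₂ : Real.exp (-((1-η/2)*(L^2/ph))) ≤ (1 - (1-p)^k₂)^(n-k₂) := by
    set x := (1-p)^k₂ with hxdef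
    have hx0 : 0 < x := hqk₂0'
    have hx2 : x ≤ 1/2 := hxhalf
    have h1x : (0:ℝ) < 1 - x := by linarith
    have hbase : Real.exp (-(x/(1-x))) ≤ 1 - x := by
      have h1 : 1 + x/(1-x) ≤ Real.exp (x/(1-x)) := by
        have := Real.add_one_le_exp (x/(1-x)); linarith
      have h2 : 1 + x/(1-x) = 1/(1-x) := by field_simp; ring
      rw [Real.exp_neg]
      rw [inv_le_comm₀ (Real.exp_pos _) h1x]
      rw [← one_div]
      linarith
    have hstep : (Real.exp (-(x/(1-x))))^(n-k₂) ≤ (1-x)^(n-k₂) :=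
      pow_le_pow_left₀ (Real.exp_pos _).le hbase _
    refine le_trans ?_ hstep
    rw [← Real.exp_nat_mul]
    apply Real.exp_le_exp.mpr
    have hnk : ((n-k₂:ℕ):ℝ) ≤ (n:ℝ) := by exact_mod_cast Nat.sub_le n k₂
    have ht0 : (0:ℝ) ≤ x/(1-x) := by positivity
    have c1 : ((n-k₂:ℕ):ℝ) * (x/(1-x)) ≤ (n:ℝ) * (x/(1-x)) :=
      mul_le_mul_of_nonneg_right hnk ht0
    have c2 : (n:ℝ) * x ≤ (1-η)*(L^2/ph) := by
      have e : (1-η)*(L^2/ph) = ((1-η)*L^2)/ph := by ring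
      rw [e, le_div_iff₀ hph0]
      have e2 : (n:ℝ) * x * ph = (n:ℝ)*x*ph := by ring
      linarith [hk₂mem]
    have hx14 : x ≤ η/4 := hqk₂small
    have c3 : (n:ℝ) * (x/(1-x)) ≤ (1-η/2)*(L^2/ph) := by
      have d1 : (n:ℝ) * (x/(1-x)) = ((n:ℝ)*x)/(1-x) := by ring
      rw [d1, div_le_iff₀ h1x]
      have hex0 : 0 ≤ η * x := by positivity
      have expand2 : (1-η/2)*(1-x) = 1 - x - η/2 + η*x/2 := by ring
      have e1 : (1-η) ≤ (1-η/2)*(1-x) := by linarith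
      have d2 : (1-η)*(L^2/ph) ≤ ((1-η/2)*(1-x))*(L^2/ph) :=
        mul_le_mul_of_nonneg_right e1 hX0
      have d3 : ((1-η/2)*(1-x))*(L^2/ph) = ((1-η/2)*(L^2/ph))*(1-x) := by ring
      linarith
    have e4 : ((n-k₂:ℕ):ℝ) * -(x/(1-x)) = -(((n-k₂:ℕ):ℝ) * (x/(1-x))) := by ring
    rw [e4]
    linarith
  have hfd2 : 1/(p*(n:ℝ)) < fdom n k₂ p := by
    have h1 : Real.exp ((1-η/4)*(L^2/ph)) * Real.exp (-((1-η/2)*(L^2/ph))) ≤ fdom n k₂ p := by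
      rw [fdom]
      apply mul_le_mul hCk₂ hpow₂ (Real.exp_pos _).le
      exact le_trans (Real.exp_pos _).le hCk₂
    rw [← Real.exp_add] at h1
    have hEL : Real.exp (-L) = 1/(p*(n:ℝ)) := by
      rw [Real.exp_neg, hLdef, Real.exp_log hpN0, one_div]
    have h3 : Real.exp (-L) < Real.exp ((1-η/4)*(L^2/ph) + -((1-η/2)*(L^2/ph))) := by
      apply Real.exp_lt_exp.mpr
      have e : (1-η/4)*(L^2/ph) + -((1-η/2)*(L^2/ph)) = (η/4)*(L^2/ph) := by ring
      rw [e]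
      have : (0:ℝ) < (η/4)*(L^2/ph) := by positivity
      linarith
    rw [← hEL]
    linarith
  -- conclusions
  have hSne : {k : ℕ | fdom n k p > 1 / (p * (n:ℝ))}.Nonempty := ⟨k₂, hfd2⟩
  have hrdef : rdom n p = sInf {k : ℕ | fdom n k p > 1 / (p * (n:ℝ))} := rfl
  have hrmem : fdom n (rdom n p) p > 1 / (p * (n:ℝ)) := by
    rw [hrdef]; exact Nat.sInf_mem hSne
  have hr1 : 1 ≤ rdom n p := by
    rcases Nat.eq_zero_or_pos (rdom n p) with h0 | h
    · exfalso
      rw [h0, hfd0] at hrmem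
      have : (0:ℝ) < 1/(p*(n:ℝ)) := by positivity
      linarith
    · exact h
  have hrk₂ : rdom n p ≤ k₂ := by
    rw [hrdef]; exact Nat.sInf_le hfd2
  refine ⟨hr1, ?_, ?_⟩
  · by_contra hcon
    push_neg at hcon
    exact absurd hrmem (not_lt.mpr (E1 _ hcon))
  · have h1 : (1-p)^(k₂-1) ≤ (1-p)^(rdom n p - 1) :=
      pow_le_pow_of_le_one hq0.le (by linarith) (Nat.sub_le_sub_right hrk₂ 1)
    have h2 : ((n:ℝ)*ph)*(1-p)^(k₂-1) ≤ ((n:ℝ)*ph)*(1-p)^(rdom n p - 1) :=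
      mul_le_mul_of_nonneg_left h1 (by positivity)
    have e1 : ((n:ℝ)*ph)*(1-p)^(k₂-1) = (n:ℝ)*(1-p)^(k₂-1)*ph := by ring
    have e2 : ((n:ℝ)*ph)*(1-p)^(rdom n p - 1) = (n:ℝ)*(1-p)^(rdom n p - 1)*ph := by ring
    linarith


/-- If `p_n √n / log² n → ∞` and eventually `p_n ≤ 1−ε`, then
`r_n = ⌈(1/p̂)·log(p̂ n / (log²(p_n n)(1+g_n)))⌉` for some sequence `g_n → 0`, where
`p̂ = log(1/(1−p_n))`. -/
theorem rdom_formula (ε : ℝ) (hε : 0 < ε) (p : ℕ → ℝ)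
    (hp01 : ∀ n, p n ∈ Set.Ioo (0 : ℝ) 1)
    (hple : Tendsto (fun n : ℕ => p n * Real.sqrt n / (Real.log n) ^ 2) atTop atTop)
    (hpe : ∀ᶠ n : ℕ in atTop, p n ≤ 1 - ε) :
    ∃ g : ℕ → ℝ, Tendsto g atTop (𝓝 0) ∧ ∀ᶠ n : ℕ in atTop,
      (rdom n (p n) : ℤ) =
        ⌈(1 / Real.log (1 / (1 - p n))) *
          Real.log (Real.log (1 / (1 - p n)) * n /
            ((Real.log (p n * n)) ^ 2 * (1 + g n)))⌉ := by
  have hlogN : Tendsto (fun n : ℕ => Real.log n) atTop atTop :=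
    Real.tendsto_log_atTop.comp tendsto_natCast_atTop_atTop
  have hsqrtR : Tendsto Real.sqrt atTop atTop := by
    rw [tendsto_atTop]
    intro b
    filter_upwards [eventually_ge_atTop (b^2)] with x hx
    calc b ≤ |b| := le_abs_self b
      _ = Real.sqrt (b^2) := (Real.sqrt_sq_eq_abs b).symm
      _ ≤ Real.sqrt x := Real.sqrt_le_sqrt hx
  have hsqrtN : Tendsto (fun n : ℕ => Real.sqrt n) atTop atTop :=
    hsqrtR.comp tendsto_natCast_atTop_atTop
  have hHPev : ∀ᶠ n : ℕ in atTop, Real.sqrt n * Real.log n ^ 2 ≤ p n * n := by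
    filter_upwards [hple.eventually_ge_atTop 1, hlogN.eventually_ge_atTop 1,
      (tendsto_natCast_atTop_atTop (R := ℝ)).eventually_ge_atTop (0:ℝ)] with n h1 h2 h3
    have hl2 : (0:ℝ) < Real.log n ^ 2 := by positivity
    rw [le_div_iff₀ hl2] at h1
    have hs : Real.sqrt n * Real.sqrt n = (n:ℝ) := Real.mul_self_sqrt h3
    have h4 : Real.log n ^ 2 ≤ p n * Real.sqrt n := by linarith
    have h5 := mul_le_mul_of_nonneg_right h4 (Real.sqrt_nonneg (n:ℝ))
    calc Real.sqrt n * Real.log n ^ 2 = Real.log n ^ 2 * Real.sqrt n := by ring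
      _ ≤ (p n * Real.sqrt n) * Real.sqrt n := h5
      _ = p n * n := by rw [mul_assoc, hs]
  have hkey : ∀ η : ℝ, 0 < η → η ≤ 1/2 → ∀ᶠ n : ℕ in atTop,
      1 ≤ rdom n (p n) ∧
      (n:ℝ) * (1 - p n) ^ (rdom n (p n)) * Real.log (1/(1-p n)) < (1+η) * Real.log (p n * n) ^ 2 ∧
      (1-η) * Real.log (p n * n) ^ 2 < (n:ℝ) * (1 - p n) ^ (rdom n (p n) - 1) * Real.log (1/(1-p n)) := by
    intro η hη hη2
    have e3 := (tendsto_natCast_atTop_atTop (R := ℝ)).eventually_ge_atTop (16:ℝ)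
    have e4 := hlogN.eventually_ge_atTop (32 * max (Real.log ε⁻¹) 1 / η)
    have e6 := hlogN.eventually_ge_atTop (2*Real.exp 1)
    have e5 := hsqrtN.eventually_ge_atTop (16/η)
    have e8 : ∀ᶠ n : ℕ in atTop, 32/η ≤ Real.sqrt (Real.log n / 2) := by
      have h := hsqrtR.comp (hlogN.atTop_div_const (show (0:ℝ) < 2 by norm_num))
      exact h.eventually_ge_atTop _
    filter_upwards [hpe, hHPev, e3, e4, e5, e6, e8] with n h1 h2 h3 h4 h5 h6 h8
    exact keystone ε η n (p n) hε hη hη2 (hp01 n).1 h1 h3 h2 h4 h5 h6 h8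
  classical
  set A : ℕ → ℝ := fun n =>
    (n:ℝ) * (1 - p n) ^ (rdom n (p n)) * Real.log (1/(1-p n)) / (Real.log (p n * n))^2
    with hAdef
  set B : ℕ → ℝ := fun n =>
    (n:ℝ) * (1 - p n) ^ (rdom n (p n) - 1) * Real.log (1/(1-p n)) / (Real.log (p n * n))^2
    with hBdef
  have hpack : ∀ η : ℝ, 0 < η → η ≤ 1/2 → ∀ᶠ n : ℕ in atTop,
      0 < Real.log (1/(1-p n)) ∧ 0 < Real.log (p n * n) ∧ 1 ≤ rdom n (p n) ∧
      A n < 1 + η ∧ 1 - η < B n ∧ 0 < A n ∧ A n < B n := by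
    intro η hη hη2
    filter_upwards [hkey η hη hη2, hpe,
      (tendsto_natCast_atTop_atTop (R := ℝ)).eventually_ge_atTop (16:ℝ),
      hlogN.eventually_ge_atTop 1, hHPev] with n hk h1 h16 hlg hhp
    obtain ⟨hr1, hup, hlo⟩ := hk
    have hp0 := (hp01 n).1
    have hq0 : 0 < 1 - p n := by linarith
    have hq1 : 1 - p n < 1 := by linarith
    have hN0 : (0:ℝ) < n := by linarith
    have hph0 : 0 < Real.log (1/(1-p n)) := by
      rw [one_div, Real.log_inv]
      have := Real.log_neg hq0 hq1
      linarith
    have hsq4 : 4 ≤ Real.sqrt n := by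
      have h := Real.sqrt_le_sqrt h16
      rwa [show (16:ℝ) = 4^2 by norm_num, Real.sqrt_sq (by norm_num)] at h
    have hlsq1 : 1 ≤ Real.log n ^ 2 := by nlinarith
    have hL0 : 0 < Real.log (p n * n) := by
      apply Real.log_pos
      nlinarith [Real.sqrt_nonneg (n:ℝ)]
    have hX2 : (0:ℝ) < Real.log (p n * n)^2 := by positivity
    have hqr0 : (0:ℝ) < (1 - p n) ^ (rdom n (p n)) := pow_pos hq0 _
    refine ⟨hph0, hL0, hr1, ?_, ?_, ?_, ?_⟩
    · simp only [hAdef]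
      rw [div_lt_iff₀ hX2]
      linarith
    · simp only [hBdef]
      rw [lt_div_iff₀ hX2]
      linarith
    · simp only [hAdef]
      exact div_pos (mul_pos (mul_pos hN0 hqr0) hph0) hX2
    · simp only [hAdef, hBdef]
      rw [div_lt_div_iff_of_pos_right hX2]
      have h2 : (1-p n)^(rdom n (p n)) < (1-p n)^(rdom n (p n)-1) := by
        have e : rdom n (p n) = (rdom n (p n) - 1) + 1 := by omega
        conv_lhs => rw [e, pow_succ]
        have h3 := pow_pos hq0 (rdom n (p n) - 1)
        nlinarith
      exact mul_lt_mul_of_pos_right (mul_lt_mul_of_pos_left h2 hN0) hph0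
  refine ⟨fun n => max (A n) (min 1 (B n * (1 - 1/((n:ℝ)+1)))) - 1, ?_, ?_⟩
  · rw [Metric.tendsto_nhds]
    intro δ hδ
    set η := min (δ/4) (1/2) with hηdef
    have hη : 0 < η := by positivity
    have hη2 : η ≤ 1/2 := min_le_right _ _
    have hsev : ∀ᶠ n : ℕ in atTop, 1/((n:ℝ)+1) ≤ η := by
      filter_upwards [(tendsto_natCast_atTop_atTop (R := ℝ)).eventually_ge_atTop (1/η)]
        with n hn
      rw [div_le_iff₀ (by positivity)]
      rw [div_le_iff₀ hη] at hn
      nlinarith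
    filter_upwards [hpack η hη hη2, hsev] with n hp hs
    obtain ⟨hph0, hL0, hr1, hA, hB, hA0, hAB⟩ := hp
    have hB0 : 0 < B n := by linarith
    have hs0 : 0 ≤ 1/((n:ℝ)+1) := by positivity
    have hup : max (A n) (min 1 (B n * (1 - 1/((n:ℝ)+1)))) ≤ 1 + η :=
      max_le (by linarith) ((min_le_left _ _).trans (by linarith))
    have hBs : (1-η)*(1-η) ≤ B n * (1 - 1/((n:ℝ)+1)) :=
      mul_le_mul hB.le (by linarith) (by linarith) (by linarith)
    have hlow : 1 - 2*η ≤ max (A n) (min 1 (B n * (1 - 1/((n:ℝ)+1)))) := by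
      refine le_trans (le_min (by linarith) ?_) (le_max_right _ _)
      nlinarith
    show dist (max (A n) (min 1 (B n * (1 - 1/((n:ℝ)+1)))) - 1) 0 < δ
    rw [Real.dist_eq, sub_zero]
    have habs : |max (A n) (min 1 (B n * (1 - 1/((n:ℝ)+1)))) - 1| ≤ 2*η :=
      abs_le.mpr ⟨by linarith, by linarith⟩
    have hηδ : η ≤ δ/4 := min_le_left _ _
    linarith
  · filter_upwards [hpack (1/2) (by norm_num) le_rfl, eventually_ge_atTop 1] with n hp hn1
    obtain ⟨hph0, hL0, hr1, hA, hB, hA0, hAB⟩ := hp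
    have hp0 := (hp01 n).1
    have hp1 := (hp01 n).2
    have hq0 : 0 < 1 - p n := by linarith
    have hn0 : (0:ℝ) < (n:ℝ)+1 := by positivity
    have hs1 : 0 < 1/((n:ℝ)+1) := by positivity
    have hs2 : 1/((n:ℝ)+1) < 1 := by
      rw [div_lt_one hn0]
      have : (1:ℝ) ≤ (n:ℝ) := by exact_mod_cast hn1
      linarith
    have hB0 : 0 < B n := lt_trans hA0 hAB
    set r := rdom n (p n) with hrdef
    set v := max (A n) (min 1 (B n * (1 - 1/((n:ℝ)+1)))) with hvdef
    have hvA : A n ≤ v := le_max_left _ _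
    have hv0 : 0 < v := lt_of_lt_of_le hA0 hvA
    have hvB : v < B n := by
      apply max_lt hAB
      apply lt_of_le_of_lt (min_le_right _ _)
      nlinarith
    set P := Real.log (1/(1-p n)) with hPdef
    set Lq := Real.log (p n * (n:ℝ)) with hLqdef
    have hLq2 : 0 < Lq^2 := by positivity
    show (r : ℤ) = ⌈(1/P) * Real.log (P * (n:ℝ) / (Lq^2 * (1 + (v - 1))))⌉
    have hgoal_e : 1 + (v - 1) = v := by ring
    rw [hgoal_e]
    have hN0 : (0:ℝ) < (n:ℝ) := by
      have : (1:ℝ) ≤ (n:ℝ) := by exact_mod_cast hn1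
      linarith
    have hAe : A n * Lq^2 = (n:ℝ) * (1-p n)^r * P := by
      simp only [hAdef]
      exact div_mul_cancel₀ _ hLq2.ne'
    have hBe : B n * Lq^2 = (n:ℝ) * (1-p n)^(r-1) * P := by
      simp only [hBdef]
      exact div_mul_cancel₀ _ hLq2.ne'
    have hPneg : Real.log (1 - p n) = -P := by
      have : P = -Real.log (1-p n) := by rw [hPdef, one_div, Real.log_inv]
      linarith
    have hqexp : ∀ m : ℕ, (1 - p n)^m = Real.exp (-(m*P)) := by
      intro m
      conv_lhs => rw [← Real.exp_log hq0]
      rw [← Real.exp_nat_mul]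
      congr 1
      rw [hPneg]; ring
    have hcast : ((r-1:ℕ):ℝ) = (r:ℝ)-1 := by
      rw [Nat.cast_sub hr1]; norm_num
    have hEq1 : Real.exp (r*P) * (1-p n)^r = 1 := by
      rw [hqexp r, ← Real.exp_add]
      simp
    have hEq2 : Real.exp (((r:ℝ)-1)*P) * (1-p n)^(r-1) = 1 := by
      rw [hqexp (r-1), ← Real.exp_add, hcast]
      simp
    set x := P * (n:ℝ) / (Lq^2 * v) with hxdef
    have hden0 : 0 < Lq^2 * v := mul_pos hLq2 hv0
    have hx0 : 0 < x := div_pos (mul_pos hph0 hN0) hden0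
    have hqr0 : (0:ℝ) < (1-p n)^r := pow_pos hq0 _
    have hqr10 : (0:ℝ) < (1-p n)^(r-1) := pow_pos hq0 _
    have hxle : x ≤ Real.exp ((r:ℝ)*P) := by
      rw [hxdef, div_le_iff₀ hden0]
      have h1 : (n:ℝ)*(1-p n)^r*P ≤ Lq^2 * v := by
        have := mul_le_mul_of_nonneg_right hvA hLq2.le
        rw [hAe] at *
        nlinarith [mul_le_mul_of_nonneg_right hvA hLq2.le, hAe]
      have c1 : Real.exp ((r:ℝ)*P)*((n:ℝ)*(1-p n)^r*P) ≤ Real.exp ((r:ℝ)*P)*(Lq^2*v) :=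
        mul_le_mul_of_nonneg_left h1 (Real.exp_pos _).le
      have c2 : Real.exp ((r:ℝ)*P)*((n:ℝ)*(1-p n)^r*P)
          = ((n:ℝ)*P)*(Real.exp ((r:ℝ)*P)*(1-p n)^r) := by ring
      rw [hEq1] at c2
      have c3 : Real.exp ((r:ℝ)*P)*((n:ℝ)*(1-p n)^r*P) = (n:ℝ)*P := by rw [c2]; ring
      linarith
    have hxgt : Real.exp (((r:ℝ)-1)*P) < x := by
      rw [hxdef, lt_div_iff₀ hden0]
      have h1 : Lq^2 * v < (n:ℝ)*(1-p n)^(r-1)*P := by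
        have h2 := mul_lt_mul_of_pos_right hvB hLq2
        rw [mul_comm (B n) (Lq^2)] at h2
        rw [mul_comm (Lq^2) (B n)] at h2
        rw [hBe] at h2
        linarith [h2]
      have c1 : Real.exp (((r:ℝ)-1)*P)*(Lq^2*v) < Real.exp (((r:ℝ)-1)*P)*((n:ℝ)*(1-p n)^(r-1)*P) :=
        mul_lt_mul_of_pos_left h1 (Real.exp_pos _)
      have c2 : Real.exp (((r:ℝ)-1)*P)*((n:ℝ)*(1-p n)^(r-1)*P)
          = ((n:ℝ)*P)*(Real.exp (((r:ℝ)-1)*P)*(1-p n)^(r-1)) := by ring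
      rw [hEq2] at c2
      have c3 : Real.exp (((r:ℝ)-1)*P)*((n:ℝ)*(1-p n)^(r-1)*P) = (n:ℝ)*P := by rw [c2]; ring
      calc Real.exp (((r:ℝ)-1)*P)*(Lq^2*v) < (n:ℝ)*P := by linarith
        _ = P*(n:ℝ) := by ring
    have hlogup : Real.log x ≤ (r:ℝ)*P := by
      have h := Real.log_le_log hx0 hxle
      rwa [Real.log_exp] at h
    have hloglow : ((r:ℝ)-1)*P < Real.log x := by
      have h := Real.log_lt_log (Real.exp_pos _) hxgt
      rwa [Real.log_exp] at h
    symm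
    rw [Int.ceil_eq_iff]
    constructor
    · push_cast
      have e : (1/P)*Real.log x = Real.log x / P := by ring
      rw [e, lt_div_iff₀ hph0]
      linarith
    · push_cast
      have e : (1/P)*Real.log x = Real.log x / P := by ring
      rw [e, div_le_iff₀ hph0]
      linarith
end

section
/- Let ε > 0 be a constant and let p = p_n ∈ (0,1) satisfy p_n·√n/(log n)² → ∞ and eventually p_n ≤ 1−ε. Then there exist constants 0 < c < C such that for all sufficiently large n: c·(log n)/p_n ≤ r_n ≤ C·(log n)/p_n, and c·(log n)²/(p_n·n) ≤ (1−p_n)^(r_n) ≤ C·(log n)²/(p_n·n). In particular r_n ≥ c·log n and r_n·(log n)/√n → 0. -/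
open Filter Real Topology

private lemma aux_exp_neg_le {x : ℝ} (hx0 : 0 ≤ x) (hx : x ≤ 1/2) :
    Real.exp (-(2*x)) ≤ 1 - x := by
  have h := Real.add_one_le_exp (2*x)
  have hpos : (0:ℝ) < 1 + 2*x := by linarith
  have h2 : Real.exp (-(2*x)) = 1/(Real.exp (2*x)) := by rw [Real.exp_neg, one_div]
  rw [h2]
  have h3 : 1/(Real.exp (2*x)) ≤ 1/(1+2*x) := by
    apply one_div_le_one_div_of_le hpos; linarith
  refine h3.trans ?_
  rw [div_le_iff₀ hpos]; nlinarith

private lemma aux_exp_div_le {ε p : ℝ} (hε : 0 < ε) (hp : 0 ≤ p) (hpe : ε ≤ 1 - p) :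
    Real.exp (-(p/ε)) ≤ 1 - p := by
  have h := Real.add_one_le_exp (p/ε)
  have hd : 0 ≤ p/ε := by positivity
  have hpos : (0:ℝ) < 1 + p/ε := by linarith
  have h2 : Real.exp (-(p/ε)) = 1/(Real.exp (p/ε)) := by rw [Real.exp_neg, one_div]
  rw [h2]
  have h3 : 1/(Real.exp (p/ε)) ≤ 1/(1+p/ε) := by
    apply one_div_le_one_div_of_le hpos; linarith
  refine h3.trans ?_
  rw [div_le_iff₀ hpos]
  have key : (1-p)*(1+p/ε) - 1 = (p/ε)*(1-ε-p) := by field_simp; ring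
  nlinarith [mul_nonneg hd (by linarith : (0:ℝ) ≤ 1 - ε - p)]

private lemma choose_lower (n k : ℕ) : (((n+1-k : ℕ))^k : ℝ) ≤ (k:ℝ)^k * (n.choose k) := by
  have h1 : (n+1-k)^k ≤ n.descFactorial k := Nat.pow_sub_le_descFactorial n k
  have h2 : n.descFactorial k = Nat.factorial k * n.choose k :=
    Nat.descFactorial_eq_factorial_mul_choose n k
  have h3 : Nat.factorial k ≤ k^k := Nat.factorial_le_pow k
  have : (n+1-k)^k ≤ k^k * n.choose k := by
    calc (n+1-k)^k ≤ Nat.factorial k * n.choose k := h2 ▸ h1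
    _ ≤ k^k * n.choose k := Nat.mul_le_mul_right _ h3
  exact_mod_cast this

set_option maxHeartbeats 2000000 in
private lemma main_est (ε : ℝ) (hε : 0 < ε) (hε1 : ε < 1) (n : ℕ) (p : ℝ)
    (hp : 0 < p) (hpe : p ≤ 1 - ε)
    (hbig : (Real.log n)^2 ≤ p * Real.sqrt n)
    (hL20 : 20 ≤ Real.log n)
    (hA : 16/ε ≤ Real.sqrt n)
    (hB : 8/ε ≤ Real.log n) :
    (ε^2/64) * Real.log n / p ≤ (rdom n p : ℝ) ∧
    (rdom n p : ℝ) ≤ 8 * Real.log n / p ∧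
    (ε^2/64) * (Real.log n)^2 / (p*n) ≤ (1-p)^(rdom n p) ∧
    (1-p)^(rdom n p) ≤ 8 * (Real.log n)^2 / (p*n) ∧
    (ε^2/64) * Real.log n ≤ (rdom n p : ℝ) := by
  set L := Real.log n with hLdef
  have hp1 : p < 1 := by linarith
  have hq0 : (0:ℝ) < 1 - p := by linarith
  have hqe : ε ≤ 1 - p := by linarith
  have hq1 : 1 - p < 1 := by linarith
  have hL0 : (0:ℝ) < L := by linarith
  have hn1 : (1:ℝ) < n := by
    by_contra h; push_neg at h
    have : Real.log n ≤ 0 := Real.log_nonpos (Nat.cast_nonneg n) h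
    linarith
  have hn0 : (0:ℝ) < n := by linarith
  have hexp : (n:ℝ) = Real.exp L := (Real.exp_log hn0).symm
  have hsqrt : Real.sqrt n = Real.exp (L/2) := by
    have h2 : Real.exp (L/2) ^ 2 = (n:ℝ) := by
      rw [sq, ← Real.exp_add, hexp]; ring_nf
    rw [← h2, Real.sqrt_sq (Real.exp_pos _).le]
  have hE5 : (6:ℝ) ≤ Real.exp (L/4) := by
    have h5 : (5:ℝ) ≤ L/4 := by linarith
    calc (6:ℝ) = 5 + 1 := by norm_num
    _ ≤ Real.exp 5 := Real.add_one_le_exp 5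
    _ ≤ Real.exp (L/4) := Real.exp_le_exp.2 h5
  have hEE : Real.exp (L/4) * Real.exp (L/4) = Real.sqrt n := by
    rw [hsqrt, ← Real.exp_add]; ring_nf
  have hsq36 : (36:ℝ) ≤ Real.sqrt n := by nlinarith
  have hsqpos : (0:ℝ) < Real.sqrt n := by linarith
  have hnsq : Real.sqrt n * Real.sqrt n = (n:ℝ) := Real.mul_self_sqrt hn0.le
  have hL1 : (1:ℝ) ≤ L := by linarith
  have hpn : L^2 * Real.sqrt n ≤ p * n := by
    calc L^2 * Real.sqrt n ≤ p * Real.sqrt n * Real.sqrt n :=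
          mul_le_mul_of_nonneg_right hbig hsqpos.le
    _ = p * n := by rw [mul_assoc, hnsq]
  have hL2one : (1:ℝ) ≤ L^2 := by nlinarith
  have hpn1 : (1:ℝ) ≤ p * n := by
    have h1 : (1:ℝ) * Real.sqrt n ≤ L^2 * Real.sqrt n :=
      mul_le_mul_of_nonneg_right hL2one hsqpos.le
    linarith
  have hpn0 : (0:ℝ) < p * n := by linarith
  have hLp1 : (1:ℝ) ≤ L/p := by
    rw [le_div_iff₀ hp]; linarith
  have hLp_sq : L/p ≤ Real.sqrt n := by
    rw [div_le_iff₀ hp]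
    have h1 : L * 1 ≤ L * L := mul_le_mul_of_nonneg_left hL1 (by linarith)
    have h2 : L * L = L^2 := by ring
    linarith [hbig, mul_comm p (Real.sqrt n)]
  have hL2p_sq : L^2/p ≤ Real.sqrt n := by
    rw [div_le_iff₀ hp]
    linarith [hbig, mul_comm p (Real.sqrt n)]
  -- generic upper bound for fdom
  have key_ub : ∀ k : ℕ, k ≤ n →
      fdom n k p ≤ Real.exp ((k:ℝ)*L - ((n:ℝ)-k)*(1-p)^k) := by
    intro k hkn
    have hqk0 : (0:ℝ) ≤ (1-p)^k := by positivity
    have hqk1 : (1-p)^k ≤ 1 := pow_le_one₀ hq0.le (by linarith)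
    have hb0 : (0:ℝ) ≤ 1 - (1-p)^k := by linarith
    have hch : (n.choose k : ℝ) ≤ (n:ℝ)^k := by exact_mod_cast Nat.choose_le_pow n k
    have hbexp : 1 - (1-p)^k ≤ Real.exp (-(1-p)^k) := by
      have := Real.add_one_le_exp (-(1-p)^k); linarith
    have hcast : ((n-k : ℕ):ℝ) = (n:ℝ) - k := by
      rw [Nat.cast_sub hkn]
    calc fdom n k p ≤ (n:ℝ)^k * (Real.exp (-(1-p)^k))^(n-k) := by
          unfold fdom
          apply mul_le_mul hch (pow_le_pow_left₀ hb0 hbexp _) (by positivity)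
            (by positivity)
    _ = Real.exp ((k:ℝ)*L - ((n:ℝ)-k)*(1-p)^k) := by
        rw [hexp, ← Real.exp_nat_mul, ← Real.exp_nat_mul, ← Real.exp_add, hcast, hexp]
        ring_nf
  -- upper witness kU
  set kU : ℕ := ⌈2*L/p⌉₊ with hkUdef
  have h2Lp_pos : (0:ℝ) < 2*L/p := by positivity
  have hkU_ge : 2*L/p ≤ (kU:ℝ) := Nat.le_ceil _
  have hkU_pos : 0 < kU := Nat.ceil_pos.mpr h2Lp_pos
  have e1 : 2*L/p = 2*(L/p) := by ring
  have e3 : 3*L/p = 3*(L/p) := by ring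
  have hkU_le : (kU:ℝ) ≤ 3*L/p := by
    have h : (kU:ℝ) < 2*L/p + 1 := Nat.ceil_lt_add_one h2Lp_pos.le
    linarith only [h, e1, e3, hLp1]
  have hkU_sq : (kU:ℝ) ≤ 3*Real.sqrt n := by
    linarith only [hkU_le, e3, hLp_sq]
  have hkU_n4 : 4*(kU:ℝ) ≤ (n:ℝ) := by nlinarith only [hsq36, hnsq, hkU_sq, Real.sqrt_nonneg (n:ℝ)]
  have hkU_len : kU ≤ n := by
    have h : (kU:ℝ) ≤ (n:ℝ) := by
      have h0 := Nat.cast_nonneg (α := ℝ) kU; linarith only [h0, hkU_n4]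
    exact_mod_cast h
  have hexp2L : Real.exp (-(2*L)) = 1/(n:ℝ)^2 := by
    rw [Real.exp_neg]
    have he : Real.exp (2*L) = (n:ℝ)^2 := by
      rw [hexp, sq, ← Real.exp_add]; ring_nf
    rw [he, one_div]
  have hq_exp : 1 - p ≤ Real.exp (-p) := by
    have := Real.add_one_le_exp (-p); linarith
  have hkUp : 2*L ≤ (kU:ℝ)*p := by
    have h := hkU_ge; rw [div_le_iff₀ hp] at h; linarith only [h]
  have hqkU : (1-p)^kU ≤ 1/(n:ℝ)^2 := by
    have h1 : (1-p)^kU ≤ (Real.exp (-p))^kU := pow_le_pow_left₀ hq0.le hq_exp kU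
    have h2 : (Real.exp (-p))^kU = Real.exp ((kU:ℝ)*(-p)) := (Real.exp_nat_mul _ _).symm
    have h3 : Real.exp ((kU:ℝ)*(-p)) ≤ Real.exp (-(2*L)) := by
      apply Real.exp_le_exp.2
      have he : (kU:ℝ)*(-p) = -((kU:ℝ)*p) := by ring
      linarith only [he, hkUp]
    have h4 := hexp2L
    calc (1-p)^kU ≤ Real.exp ((kU:ℝ)*(-p)) := h2 ▸ h1
    _ ≤ Real.exp (-(2*L)) := h3
    _ = 1/(n:ℝ)^2 := h4
  have hinvsq : 1/(n:ℝ)^2 ≤ 1 := by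
    rw [div_le_one (by positivity)]; nlinarith only [hn1]
  have hber : (1:ℝ) - 1/(n:ℝ) ≤ (1 - 1/(n:ℝ)^2)^n := by
    have h := one_add_mul_le_pow (a := -(1/(n:ℝ)^2))
      (by linarith : (-2:ℝ) ≤ -(1/(n:ℝ)^2)) n
    have he1 : (1:ℝ) + -(1/(n:ℝ)^2) = 1 - 1/(n:ℝ)^2 := by ring
    rw [he1] at h
    have he2 : (n:ℝ)*(1/(n:ℝ)^2) = 1/(n:ℝ) := by
      field_simp
    linarith only [h, he2]
  have hb2 : (0:ℝ) ≤ 1 - 1/(n:ℝ)^2 := by linarith only [hinvsq]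
  have hb3 : 1 - 1/(n:ℝ)^2 ≤ 1 := by
    have h : (0:ℝ) ≤ 1/(n:ℝ)^2 := by positivity
    linarith only [h]
  have hn2' : (2:ℝ) ≤ (n:ℝ) := by nlinarith only [hsq36, hnsq]
  have hinv_half : 1/(n:ℝ) ≤ 1/2 := by
    rw [div_le_div_iff₀ hn0 two_pos]; linarith only [hn2']
  have hhalf : (1/2:ℝ) ≤ (1 - (1-p)^kU)^(n - kU) := by
    have s1 : (1/2:ℝ) ≤ (1 - 1/(n:ℝ)^2)^n := by linarith only [hber, hinv_half]
    have s2 : (1 - 1/(n:ℝ)^2)^n ≤ (1 - 1/(n:ℝ)^2)^(n - kU) :=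
      pow_le_pow_of_le_one hb2 hb3 (Nat.sub_le n kU)
    have s3 : (1 - 1/(n:ℝ)^2)^(n-kU) ≤ (1 - (1-p)^kU)^(n-kU) :=
      pow_le_pow_left₀ hb2 (by linarith only [hqkU]) _
    linarith only [s1, s2, s3]
  have hc1 := choose_lower n kU
  have hcastU : ((n+1-kU : ℕ):ℝ) = (n:ℝ)+1-kU := by
    have h : kU ≤ n+1 := by omega
    rw [Nat.cast_sub h]; push_cast; ring
  rw [hcastU] at hc1
  have hbase3 : 3*(kU:ℝ) ≤ (n:ℝ)+1-kU := by linarith only [hkU_n4]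
  have hch3 : (3:ℝ) ≤ (n.choose kU : ℝ) := by
    have h1 : ((3:ℝ)*kU)^kU ≤ ((n:ℝ)+1-kU)^kU :=
      pow_le_pow_left₀ (by positivity) hbase3 _
    have h3 : ((3:ℝ)*kU)^kU = 3^kU * (kU:ℝ)^kU := by rw [mul_pow]
    have hkpow : (0:ℝ) < (kU:ℝ)^kU := by
      apply pow_pos; exact_mod_cast hkU_pos
    have h5 : (3:ℝ)^kU ≤ (n.choose kU : ℝ) := by
      have h4 : (kU:ℝ)^kU * (3:ℝ)^kU ≤ (kU:ℝ)^kU * (n.choose kU : ℝ) := by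
        calc (kU:ℝ)^kU * (3:ℝ)^kU = ((3:ℝ)*kU)^kU := by rw [mul_pow]; ring
        _ ≤ ((n:ℝ)+1-kU)^kU := h1
        _ ≤ (kU:ℝ)^kU * (n.choose kU : ℝ) := hc1
      exact le_of_mul_le_mul_left h4 hkpow
    calc (3:ℝ) ≤ (3:ℝ)^kU := le_self_pow₀ (by norm_num) (by omega)
    _ ≤ _ := h5
  have hkUS : fdom n kU p > 1/(p*(n:ℝ)) := by
    have hf : (3:ℝ)*(1/2) ≤ fdom n kU p := by
      unfold fdom
      apply mul_le_mul hch3 hhalf (by norm_num) (Nat.cast_nonneg _)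
    have h1 : 1/(p*(n:ℝ)) ≤ 1 := by rw [div_le_one hpn0]; exact hpn1
    linarith only [hf, h1]
  have hSne : {k : ℕ | fdom n k p > 1/(p*(n:ℝ))}.Nonempty := ⟨kU, hkUS⟩
  have hrS : fdom n (rdom n p) p > 1/(p*(n:ℝ)) := by
    unfold rdom; exact Nat.sInf_mem hSne
  have hr_leU : rdom n p ≤ kU := by
    unfold rdom; exact Nat.sInf_le hkUS
  set r : ℕ := rdom n p with hrdef
  have hr_le : (r:ℝ) ≤ 3*L/p := le_trans (by exact_mod_cast hr_leU) hkU_le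
  have hr_sq : (r:ℝ) ≤ 3*Real.sqrt n := by
    have : (r:ℝ) ≤ (kU:ℝ) := by exact_mod_cast hr_leU
    linarith
  have hr_n4 : 4*(r:ℝ) ≤ (n:ℝ) := by
    have : (r:ℝ) ≤ (kU:ℝ) := by exact_mod_cast hr_leU
    linarith
  have hr_len : r ≤ n := le_trans hr_leU hkU_len
  have hnnat0 : n ≠ 0 := by
    have h : 0 < n := by exact_mod_cast hn0
    omega
  have hqgeps : Real.exp (-(p/ε)) ≤ 1 - p := aux_exp_div_le hε hp.le hqe
  have hE2 : Real.exp (L/2) = Real.exp (L/4) * Real.exp (L/4) := by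
    rw [← Real.exp_add]; ring_nf
  have hE3 : Real.exp (3*L/4) = Real.exp (L/4) * Real.exp (L/4) * Real.exp (L/4) := by
    rw [← Real.exp_add, ← Real.exp_add]; ring_nf
  have hLE : L ≤ 4*Real.exp (L/4) - 4 := by
    have := Real.add_one_le_exp (L/4); linarith
  have hh1 : 6*Real.exp (L/4) ≤ Real.exp (L/4) * Real.exp (L/4) :=
    mul_le_mul_of_nonneg_right hE5 (Real.exp_pos _).le
  have hh2 : 6*(Real.exp (L/4) * Real.exp (L/4)) ≤
      Real.exp (L/4) * Real.exp (L/4) * Real.exp (L/4) := by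
    have h := mul_le_mul_of_nonneg_right hE5
      (mul_nonneg (Real.exp_pos (L/4)).le (Real.exp_pos (L/4)).le)
    linarith [h]
  -- lower bound on r
  have hlow : (ε/4)*(L/p) ≤ (r:ℝ) := by
    by_contra hcon
    push_neg at hcon
    have hfle : fdom n r p ≤ 1/(p*(n:ℝ)) := by
      rcases Nat.eq_zero_or_pos r with h0 | hposr
      · rw [h0]; unfold fdom
        simp only [pow_zero, sub_self, Nat.choose_zero_right, Nat.sub_zero,
          Nat.cast_one, one_mul]
        rw [zero_pow hnnat0]
        positivity
      · have h1 := key_ub r hr_len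
        have hrp : (r:ℝ)*p ≤ (ε/4)*L := by
          have h2 := mul_lt_mul_of_pos_right hcon hp
          have he : (ε/4)*(L/p)*p = (ε/4)*L := by field_simp
          linarith only [h2, he]
        have hqr_low : Real.exp (-(L/4)) ≤ (1-p)^r := by
          have s1 : (Real.exp (-(p/ε)))^r ≤ (1-p)^r :=
            pow_le_pow_left₀ (Real.exp_pos _).le hqgeps r
          have s2 : (Real.exp (-(p/ε)))^r = Real.exp ((r:ℝ)*(-(p/ε))) :=
            (Real.exp_nat_mul _ _).symm
          have s3 : -(L/4) ≤ (r:ℝ)*(-(p/ε)) := by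
            have he : (r:ℝ)*(-(p/ε)) = -((r:ℝ)*p/ε) := by ring
            rw [he, neg_le_neg_iff, div_le_div_iff₀ hε (by norm_num : (0:ℝ) < 4)]
            linarith only [hrp]
          calc Real.exp (-(L/4)) ≤ Real.exp ((r:ℝ)*(-(p/ε))) := Real.exp_le_exp.2 s3
          _ = (Real.exp (-(p/ε)))^r := s2.symm
          _ ≤ (1-p)^r := s1
        have hnr : (n:ℝ)/2 ≤ (n:ℝ) - r := by linarith only [hr_n4]
        have hprod : (n:ℝ)/2 * Real.exp (-(L/4)) ≤ ((n:ℝ) - r)*(1-p)^r :=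
          mul_le_mul hnr hqr_low (Real.exp_pos _).le (by linarith only [hr_n4, (Nat.cast_nonneg r : (0:ℝ) ≤ r)])
        have hrL : (r:ℝ)*L ≤ Real.exp (L/2)/4 := by
          have s1 : (r:ℝ)*L ≤ (ε/4)*(L/p)*L :=
            mul_le_mul_of_nonneg_right hcon.le (by linarith only [hL0])
          have s2 : (ε/4)*(L/p)*L ≤ (1/4)*(L^2/p) := by
            have he : (ε/4)*(L/p)*L = (ε/4)*(L^2/p) := by ring
            rw [he]
            apply mul_le_mul_of_nonneg_right _ (by positivity)
            linarith only [hε1]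
          have s3 : L^2/p ≤ Real.exp (L/2) := by rw [← hsqrt]; exact hL2p_sq
          linarith only [s1, s2, s3]
        have hnre : (n:ℝ)/2 * Real.exp (-(L/4)) = Real.exp (3*L/4)/2 := by
          rw [hexp, div_mul_eq_mul_div, ← Real.exp_add]; ring_nf
        have h2 : Real.exp (3*L/4)/2 ≤ ((n:ℝ)-r)*(1-p)^r := by
          rw [← hnre]; exact hprod
        have hnum : (r:ℝ)*L - ((n:ℝ)-r)*(1-p)^r ≤ -(2*L) := by
          linarith only [hrL, h2, hE2, hE3, hLE, hE5, hh1, hh2]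
        have hfinal : fdom n r p ≤ Real.exp (-(2*L)) :=
          le_trans h1 (Real.exp_le_exp.2 hnum)
        have hcmp : Real.exp (-(2*L)) ≤ 1/(p*(n:ℝ)) := by
          rw [hexp2L]
          apply one_div_le_one_div_of_le hpn0
          have u1 : p*(n:ℝ) ≤ 1*(n:ℝ) := mul_le_mul_of_nonneg_right hp1.le hn0.le
          have u2 : 1*(n:ℝ) ≤ (n:ℝ)*(n:ℝ) := mul_le_mul_of_nonneg_right hn1.le hn0.le
          have u3 : (n:ℝ)^2 = (n:ℝ)*(n:ℝ) := by ring
          linarith only [u1, u2, u3]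
        linarith only [hfinal, hcmp]
    linarith only [hrS, hfle]
  have hLpL : L ≤ L/p := by
    rw [le_div_iff₀ hp]
    have h := mul_le_mul_of_nonneg_left hp1.le hL0.le
    linarith only [h]
  have hr2 : 2 ≤ r := by
    have h1 : (2:ℝ) ≤ (r:ℝ) := by
      have h2 : (ε/4)*(8/ε) ≤ (ε/4)*(L/p) :=
        mul_le_mul_of_nonneg_left (le_trans hB hLpL) (by positivity)
      have h3 : (ε/4)*(8/ε) = 2 := by field_simp; ring
      linarith only [h2, h3, hlow]
    exact_mod_cast h1
  -- upper bound on (1-p)^r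
  have hqr_ub : (1-p)^r ≤ 8*L^2/(p*(n:ℝ)) := by
    have h1 := key_ub r hr_len
    have h2 : Real.exp (-L) ≤ 1/(p*(n:ℝ)) := by
      have e : Real.exp (-L) = 1/(n:ℝ) := by
        rw [Real.exp_neg, ← hexp, one_div]
      rw [e]
      apply one_div_le_one_div_of_le hpn0
      have u1 : p*(n:ℝ) ≤ 1*(n:ℝ) := mul_le_mul_of_nonneg_right hp1.le hn0.le
      linarith only [u1]
    have h3 : Real.exp (-L) < Real.exp ((r:ℝ)*L - ((n:ℝ)-r)*(1-p)^r) := by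
      calc Real.exp (-L) ≤ 1/(p*(n:ℝ)) := h2
      _ < fdom n r p := hrS
      _ ≤ _ := h1
    have h4 : -L < (r:ℝ)*L - ((n:ℝ)-r)*(1-p)^r := Real.exp_lt_exp.mp h3
    have h5 : ((n:ℝ)-r)*(1-p)^r < 4*(L^2/p) := by
      have s1 : ((r:ℝ)+1)*L ≤ 4*(L/p)*L := by
        apply mul_le_mul_of_nonneg_right _ (by linarith only [hL0])
        linarith only [hr_le, hLp1, e3]
      have s2 : 4*(L/p)*L = 4*(L^2/p) := by ring
      linarith only [h4, s1, s2]
    have h6 : (n:ℝ)/2*(1-p)^r ≤ ((n:ℝ)-r)*(1-p)^r :=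
      mul_le_mul_of_nonneg_right (by linarith only [hr_n4]) (by positivity)
    rw [le_div_iff₀ hpn0]
    have h7 : (n:ℝ)/2*(1-p)^r ≤ 4*(L^2/p) := by linarith only [h5, h6]
    have h9 : 2*p*((n:ℝ)/2*(1-p)^r) ≤ 2*p*(4*(L^2/p)) :=
      mul_le_mul_of_nonneg_left h7 (by linarith only [hp])
    have h10 : 2*p*(4*(L^2/p)) = 8*L^2 := by field_simp; ring
    have h8 : (1-p)^r*(p*(n:ℝ)) = 2*p*((n:ℝ)/2*(1-p)^r) := by ring
    linarith only [h8, h9, h10]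
  -- lower bound on (1-p)^r
  set k := r - 1 with hkdef
  have hk1 : 1 ≤ k := by omega
  have hkr : (k:ℝ) = (r:ℝ) - 1 := by
    have h : (k:ℕ) + 1 = r := by omega
    have h2 : ((k:ℕ):ℝ) + 1 = (r:ℝ) := by exact_mod_cast congrArg (Nat.cast (R := ℝ)) h
    linarith
  have hkn : k ≤ n := by omega
  have hkS : fdom n k p ≤ 1/(p*(n:ℝ)) := by
    by_contra h
    push_neg at h
    have hle : rdom n p ≤ k :=
      Nat.sInf_le (show k ∈ {k : ℕ | fdom n k p > 1/(p*(n:ℝ))} from h)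
    omega
  have hqk_pow : (1-p)^k * (1-p) = (1-p)^r := by
    rw [← pow_succ]; congr 1; omega
  have hLsqpn : L^2/(p*(n:ℝ)) ≤ 1/Real.sqrt n := by
    rw [div_le_div_iff₀ hpn0 hsqpos]
    linarith only [hpn]
  have hqk0 : (0:ℝ) ≤ (1-p)^k := by positivity
  have hqk_half : (1-p)^k ≤ 1/2 := by
    have s1 : (1-p)^k * ε ≤ (1-p)^k * (1-p) :=
      mul_le_mul_of_nonneg_left hqe hqk0
    have s2 : 8*(L^2/(p*(n:ℝ))) ≤ 8*(1/Real.sqrt n) :=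
      mul_le_mul_of_nonneg_left hLsqpn (by norm_num)
    have s3 : 8*L^2/(p*(n:ℝ)) = 8*(L^2/(p*(n:ℝ))) := by ring
    have s4 : (1-p)^k * ε ≤ 8*(1/Real.sqrt n) := by
      linarith only [hqr_ub, s1, s2, s3, hqk_pow]
    have s5 : 8*(1/Real.sqrt n) ≤ ε/2 := by
      rw [mul_one_div, div_le_div_iff₀ hsqpos (by norm_num : (0:ℝ) < 2)]
      have h := mul_le_mul_of_nonneg_left hA hε.le
      have e : ε*(16/ε) = 16 := by field_simp
      linarith only [h, e]
    have s6 : (1-p)^k * ε ≤ (1/2)*ε := by linarith only [s4, s5]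
    exact le_of_mul_le_mul_right s6 hε
  have hexpk : Real.exp (-(2*(1-p)^k)) ≤ 1 - (1-p)^k := aux_exp_neg_le hqk0 hqk_half
  have hkpos : (0:ℝ) < (k:ℝ) := by exact_mod_cast hk1
  have hcastk : ((n+1-k : ℕ):ℝ) = (n:ℝ)+1-k := by
    have h : k ≤ n+1 := by omega
    rw [Nat.cast_sub h]; push_cast; ring
  have hkr_sq : (k:ℝ) ≤ 3*Real.sqrt n := by rw [hkr]; linarith only [hr_sq]
  have hbB : Real.exp (L/4) ≤ ((n:ℝ)+1-k)/k := by
    rw [le_div_iff₀ hkpos]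
    have c1 : (k:ℝ) ≤ 3*(Real.exp (L/4)*Real.exp (L/4)) := by
      rw [← hE2, ← hsqrt]; linarith only [hkr_sq]
    have c2 : (n:ℝ) = (Real.exp (L/4)*Real.exp (L/4))*(Real.exp (L/4)*Real.exp (L/4)) := by
      rw [← hE2, ← hsqrt]; exact hnsq.symm
    have hE0 : (0:ℝ) < Real.exp (L/4) := Real.exp_pos _
    have h1E : (1:ℝ) ≤ Real.exp (L/4) := by linarith
    have m1 : Real.exp (L/4)*(k:ℝ) ≤ Real.exp (L/4)*(3*(Real.exp (L/4)*Real.exp (L/4))) :=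
      mul_le_mul_of_nonneg_left c1 hE0.le
    have m1' : Real.exp (L/4)*(3*(Real.exp (L/4)*Real.exp (L/4)))
        = 3*(Real.exp (L/4)*Real.exp (L/4)*Real.exp (L/4)) := by ring
    have m3 : 6*(Real.exp (L/4)*Real.exp (L/4)*Real.exp (L/4))
        ≤ Real.exp (L/4)*(Real.exp (L/4)*Real.exp (L/4)*Real.exp (L/4)) :=
      mul_le_mul_of_nonneg_right hE5 (by positivity)
    have m3' : Real.exp (L/4)*(Real.exp (L/4)*Real.exp (L/4)*Real.exp (L/4))
        = (Real.exp (L/4)*Real.exp (L/4))*(Real.exp (L/4)*Real.exp (L/4)) := by ring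
    have m4 : Real.exp (L/4)*Real.exp (L/4)
        ≤ Real.exp (L/4)*Real.exp (L/4)*Real.exp (L/4) := by
      have := mul_le_mul_of_nonneg_left h1E
        (mul_nonneg (Real.exp_pos (L/4)).le (Real.exp_pos (L/4)).le)
      linarith only [this]
    linarith only [c1, c2, m1, m1', m3, m3', m4]
  have hbase_pow : Real.exp ((k:ℝ)*(L/4)) ≤ (((n:ℝ)+1-k)/k)^k := by
    calc Real.exp ((k:ℝ)*(L/4)) = (Real.exp (L/4))^k := Real.exp_nat_mul _ _
    _ ≤ _ := pow_le_pow_left₀ (Real.exp_pos _).le hbB k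
  have hfdom_lb : Real.exp ((k:ℝ)*(L/4) - 2*((n:ℝ)*(1-p)^k)) ≤ fdom n k p := by
    have c1 : (((n:ℝ)+1-k)/k)^k ≤ (n.choose k : ℝ) := by
      have h := choose_lower n k
      rw [hcastk] at h
      rw [div_pow, div_le_iff₀ (by positivity : (0:ℝ) < (k:ℝ)^k)]
      linarith only [h, mul_comm ((k:ℝ)^k) ((n.choose k : ℝ))]
    have c2 : Real.exp (-(2*((n:ℝ)*(1-p)^k))) ≤ (1 - (1-p)^k)^(n-k) := by
      have hc : ((n-k:ℕ):ℝ) = (n:ℝ)-k := by rw [Nat.cast_sub hkn]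
      calc Real.exp (-(2*((n:ℝ)*(1-p)^k)))
          ≤ Real.exp (((n-k:ℕ):ℝ)*(-(2*(1-p)^k))) := by
            apply Real.exp_le_exp.2
            rw [hc]
            linarith only [mul_nonneg hkpos.le hqk0]
      _ = (Real.exp (-(2*(1-p)^k)))^(n-k) := Real.exp_nat_mul _ _
      _ ≤ (1-(1-p)^k)^(n-k) := pow_le_pow_left₀ (Real.exp_pos _).le hexpk _
    calc Real.exp ((k:ℝ)*(L/4) - 2*((n:ℝ)*(1-p)^k))
        = Real.exp ((k:ℝ)*(L/4)) * Real.exp (-(2*((n:ℝ)*(1-p)^k))) := by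
          rw [← Real.exp_add]; ring_nf
    _ ≤ (n.choose k : ℝ) * (1-(1-p)^k)^(n-k) :=
        mul_le_mul (hbase_pow.trans c1) c2 (Real.exp_pos _).le (Nat.cast_nonneg _)
    _ = fdom n k p := rfl
  have hone : fdom n k p ≤ 1 :=
    le_trans hkS (by rw [div_le_one hpn0]; exact hpn1)
  have hexp0 : Real.exp ((k:ℝ)*(L/4) - 2*((n:ℝ)*(1-p)^k)) ≤ Real.exp 0 := by
    rw [Real.exp_zero]; exact le_trans hfdom_lb hone
  have h2n : (k:ℝ)*(L/4) ≤ 2*((n:ℝ)*(1-p)^k) := by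
    have h := Real.exp_le_exp.mp hexp0; linarith only [h]
  have hke : (ε/8)*(L/p) ≤ (k:ℝ) := by
    rw [hkr]
    have s1 : (1:ℝ) ≤ (ε/8)*(L/p) := by
      have s2 : 8/ε ≤ L/p := le_trans hB hLpL
      have s3 : (ε/8)*(8/ε) ≤ (ε/8)*(L/p) :=
        mul_le_mul_of_nonneg_left s2 (by positivity)
      have s4 : (ε/8)*(8/ε) = 1 := by field_simp
      linarith only [s3, s4]
    have e : (ε/4)*(L/p) = 2*((ε/8)*(L/p)) := by ring
    linarith only [hlow, s1, e]
  have hqk_lb : (ε/64)*(L^2/(p*(n:ℝ))) ≤ (1-p)^k := by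
    have s1 : (ε/8)*(L/p)*(L/4) ≤ (k:ℝ)*(L/4) :=
      mul_le_mul_of_nonneg_right hke (by linarith)
    have s2 : (ε/8)*(L/p)*(L/4) = (ε/32)*(L^2/p) := by ring
    have s3 : (ε/32)*(L^2/p) ≤ 2*((n:ℝ)*(1-p)^k) := by linarith only [s1, s2, h2n]
    have h2n0 : (0:ℝ) < 2*(n:ℝ) := by linarith only [hn0]
    apply le_of_mul_le_mul_right _ h2n0
    calc (ε/64)*(L^2/(p*(n:ℝ))) * (2*(n:ℝ)) = (ε/32)*(L^2/p) := by
          field_simp; ring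
    _ ≤ 2*((n:ℝ)*(1-p)^k) := s3
    _ = (1-p)^k*(2*(n:ℝ)) := by ring
  have hqr_lb : (ε^2/64)*(L^2/(p*(n:ℝ))) ≤ (1-p)^r := by
    rw [← hqk_pow]
    calc (ε^2/64)*(L^2/(p*(n:ℝ))) = ((ε/64)*(L^2/(p*(n:ℝ))))*ε := by ring
    _ ≤ (1-p)^k*(1-p) := mul_le_mul hqk_lb hqe hε.le hqk0
  -- conclusions
  have hLp0 : (0:ℝ) ≤ L/p := by positivity
  have hc14 : (ε^2/64) ≤ ε/4 := by
    have h := mul_le_mul_of_nonneg_left hε1.le hε.le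
    have e : ε^2 = ε*ε := by ring
    linarith only [h, e, hε.le]
  refine ⟨?_, ?_, ?_, ?_, ?_⟩
  · have e : (ε^2/64)*L/p = (ε^2/64)*(L/p) := by ring
    rw [e]
    have h : (ε^2/64)*(L/p) ≤ (ε/4)*(L/p) := mul_le_mul_of_nonneg_right hc14 hLp0
    linarith only [hlow, h]
  · have e : 8*L/p = 8*(L/p) := by ring
    rw [e]
    linarith only [hr_le, e3, hLp0]
  · have e : (ε^2/64)*L^2/(p*(n:ℝ)) = (ε^2/64)*(L^2/(p*(n:ℝ))) := by ring
    rw [e]; exact hqr_lb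
  · exact hqr_ub
  · have s1 : (ε^2/64)*L ≤ (ε^2/64)*(L/p) :=
      mul_le_mul_of_nonneg_left hLpL (by positivity)
    have s2 : (ε^2/64)*(L/p) ≤ (ε/4)*(L/p) := mul_le_mul_of_nonneg_right hc14 hLp0
    linarith only [hlow, s1, s2]

/-- If `p_n √n / log² n → ∞` and eventually `p_n ≤ 1−ε`, then
`r_n = Θ(log n / p_n)` and `(1−p_n)^{r_n} = Θ(log² n/(p_n n))`; in particular
`r_n = Ω(log n)` and `r_n log n / √n → 0`. -/
theorem rdom_order (ε : ℝ) (hε : 0 < ε) (p : ℕ → ℝ)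
    (hp01 : ∀ n, p n ∈ Set.Ioo (0 : ℝ) 1)
    (hple : Tendsto (fun n : ℕ => p n * Real.sqrt n / (Real.log n) ^ 2) atTop atTop)
    (hpe : ∀ᶠ n : ℕ in atTop, p n ≤ 1 - ε) :
    ∃ c C : ℝ, 0 < c ∧ c < C ∧
      (∀ᶠ n : ℕ in atTop,
        c * Real.log n / p n ≤ (rdom n (p n) : ℝ) ∧
        (rdom n (p n) : ℝ) ≤ C * Real.log n / p n ∧
        c * (Real.log n) ^ 2 / (p n * n) ≤ (1 - p n) ^ (rdom n (p n)) ∧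
        (1 - p n) ^ (rdom n (p n)) ≤ C * (Real.log n) ^ 2 / (p n * n) ∧
        c * Real.log n ≤ (rdom n (p n) : ℝ)) ∧
      Tendsto (fun n : ℕ => (rdom n (p n) : ℝ) * Real.log n / Real.sqrt n) atTop (𝓝 0) := by
  have hε1 : ε < 1 := by
    obtain ⟨m, hm⟩ := hpe.exists
    have h1 := (hp01 m).1
    linarith
  have hlogT : Tendsto (fun n : ℕ => Real.log n) atTop atTop :=
    Real.tendsto_log_atTop.comp tendsto_natCast_atTop_atTop
  have h1 : ∀ᶠ n : ℕ in atTop, 1 ≤ p n * Real.sqrt n / (Real.log n)^2 :=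
    hple.eventually_ge_atTop 1
  have h2 : ∀ᶠ n : ℕ in atTop, 20 ≤ Real.log n := hlogT.eventually_ge_atTop 20
  have h4 : ∀ᶠ n : ℕ in atTop, 8/ε ≤ Real.log n := hlogT.eventually_ge_atTop _
  have h3 : ∀ᶠ n : ℕ in atTop, 16/ε ≤ Real.sqrt n := by
    have hn : ∀ᶠ n : ℕ in atTop, (16/ε)^2 ≤ (n:ℝ) :=
      tendsto_natCast_atTop_atTop.eventually_ge_atTop _
    filter_upwards [hn] with n hn
    calc 16/ε = Real.sqrt ((16/ε)^2) := (Real.sqrt_sq (by positivity)).symm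
    _ ≤ Real.sqrt n := Real.sqrt_le_sqrt hn
  have hbig : ∀ᶠ n : ℕ in atTop, (Real.log n)^2 ≤ p n * Real.sqrt n := by
    filter_upwards [h1, h2] with n a b
    have hL2 : (0:ℝ) < (Real.log n)^2 := by positivity
    rw [le_div_iff₀ hL2] at a
    linarith
  have hmain : ∀ᶠ n : ℕ in atTop,
      (ε^2/64) * Real.log n / p n ≤ (rdom n (p n) : ℝ) ∧
      (rdom n (p n) : ℝ) ≤ 8 * Real.log n / p n ∧
      (ε^2/64) * (Real.log n)^2 / (p n * n) ≤ (1 - p n) ^ (rdom n (p n)) ∧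
      (1 - p n) ^ (rdom n (p n)) ≤ 8 * (Real.log n)^2 / (p n * n) ∧
      (ε^2/64) * Real.log n ≤ (rdom n (p n) : ℝ) := by
    filter_upwards [hbig, h2, h3, h4, hpe] with n a b c d e
    exact main_est ε hε hε1 n (p n) (hp01 n).1 e a b c d
  refine ⟨ε^2/64, 8, by positivity, by nlinarith, hmain, ?_⟩
  have hz : Tendsto (fun n : ℕ => 8*(p n * Real.sqrt n/(Real.log n)^2)⁻¹) atTop (𝓝 0) := by
    have h := hple.inv_tendsto_atTop.const_mul (8:ℝ)
    simpa using h
  apply squeeze_zero' ?_ ?_ hz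
  · filter_upwards [h2] with n hb
    apply div_nonneg (mul_nonneg (Nat.cast_nonneg _) (by linarith)) (Real.sqrt_nonneg _)
  · filter_upwards [hmain, hbig, h2] with n hm ha hb
    set L := Real.log n with hLdef
    have hp := (hp01 n).1
    have hL0 : (0:ℝ) < L := by linarith
    have hs0 : (0:ℝ) < Real.sqrt n := by
      by_contra hcon
      push_neg at hcon
      have h0 : Real.sqrt n = 0 := le_antisymm hcon (Real.sqrt_nonneg _)
      rw [h0, mul_zero] at ha
      have : (0:ℝ) < L^2 := by positivity
      linarith
    have hrp : (rdom n (p n) : ℝ)*(p n) ≤ 8*L := by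
      have hub := hm.2.1
      have h' := mul_le_mul_of_nonneg_right hub hp.le
      have e : 8*L/(p n)*(p n) = 8*L := by field_simp
      linarith only [h', e]
    have e1 : (p n * Real.sqrt n/L^2)⁻¹ = L^2/(p n * Real.sqrt n) := by
      rw [inv_div]
    rw [e1]
    have e2 : 8*(L^2/(p n*Real.sqrt n)) = (8*L^2)/(p n*Real.sqrt n) := by ring
    rw [e2, div_le_div_iff₀ hs0 (mul_pos hp hs0)]
    have hnn : (0:ℝ) ≤ L*Real.sqrt n := mul_nonneg hL0.le hs0.le
    have key := mul_le_mul_of_nonneg_right hrp hnn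
    have e5 : (rdom n (p n):ℝ)*L*(p n*Real.sqrt n)
        = (rdom n (p n):ℝ)*(p n)*(L*Real.sqrt n) := by ring
    have e6 : 8*L*(L*Real.sqrt n) = 8*L^2*Real.sqrt n := by ring
    linarith only [key, e5, e6]
end

section
/- Let n ≥ 2, p ∈ (0,1), let k be an integer with 1 ≤ k ≤ n−1, and let (u,v) be an ordered pair of distinct vertices of the random graph G(n,p). For j ≥ 1, let D̂_j(u,v) be the number of sets D of cardinality k with v ∈ D and u ∉ D that are dominating sets of the graph G(n,p)+uv (the random graph with the edge uv added) and such that u has exactly j neighbours in D in G(n,p)+uv. Then E[ Σ_{j=1}^{k} D̂_j(u,v)/j ] = ((n−k)/(p·n·(n−1)))·f(n,k,p). -/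
open Filter Real Topology

noncomputable section
namespace EDaux

variable {n : ℕ}

abbrev ET (n : ℕ) := {e : Sym2 (Fin n) // ¬ e.IsDiag}

def et (a b : Fin n) (h : a ≠ b) : ET n := ⟨s(a,b), by simpa using h⟩

def gOf (f : ET n → Bool) : SimpleGraph (Fin n) where
  Adj a b := ∃ h : a ≠ b, f (et a b h) = true
  symm := by
    refine ⟨?_⟩
    rintro a b ⟨h, hf⟩
    refine ⟨h.symm, ?_⟩
    have : et b a h.symm = et a b h := Subtype.ext (Sym2.eq_swap)
    rw [this]; exact hf
  loopless := ⟨by rintro a ⟨h, -⟩; exact h rfl⟩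

instance (f : ET n → Bool) : DecidableRel (gOf f).Adj := by
  unfold gOf; intro a b; by_cases h : a = b
  · exact .isFalse (by rintro ⟨h', -⟩; exact h' h)
  · by_cases hf : f (et a b h) = true
    · exact .isTrue ⟨h, hf⟩
    · exact .isFalse (by rintro ⟨h', hf'⟩; exact hf hf')

def fOf (G : SimpleGraph (Fin n)) [DecidableRel G.Adj] : ET n → Bool :=
  fun e => Sym2.lift ⟨fun a b => decide (G.Adj a b), by intro a b; simp [SimpleGraph.adj_comm]⟩ e.1

lemma fOf_spec (G : SimpleGraph (Fin n)) [DecidableRel G.Adj] (a b : Fin n) (h : a ≠ b) :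
    fOf G (et a b h) = decide (G.Adj a b) := rfl

lemma gOf_fOf (G : SimpleGraph (Fin n)) [DecidableRel G.Adj] : gOf (fOf G) = G := by
  ext a b
  constructor
  · rintro ⟨h, hf⟩
    rw [fOf_spec] at hf
    exact of_decide_eq_true hf
  · intro hadj
    exact ⟨hadj.ne, by rw [fOf_spec]; exact decide_eq_true hadj⟩

lemma fOf_gOf (f : ET n → Bool) : fOf (gOf f) = f := by
  funext e
  obtain ⟨e1, he⟩ := e
  induction e1 using Sym2.ind with
  | _ a b =>
    have h : a ≠ b := by simpa using he
    have h1 : (⟨s(a,b), he⟩ : ET n) = et a b h := rfl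
    rw [h1, fOf_spec]
    have hadj : (gOf f).Adj a b ↔ f (et a b h) = true := by
      constructor
      · rintro ⟨h', hf⟩; exact hf
      · intro hf; exact ⟨h, hf⟩
    rcases Bool.eq_false_or_eq_true (f (et a b h)) with hb | hb <;> simp [hadj, hb]


lemma fOf_irrel (G : SimpleGraph (Fin n)) (i1 i2 : DecidableRel G.Adj) :
    @fOf n G i1 = @fOf n G i2 := by
  rw [Subsingleton.elim i1 i2]

def grEquiv (n : ℕ) : (ET n → Bool) ≃ SimpleGraph (Fin n) where
  toFun := gOf
  invFun G := letI := Classical.decRel G.Adj; fOf G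
  left_inv f := (fOf_irrel (gOf f) (Classical.decRel _) inferInstance).trans (fOf_gOf f)
  right_inv G := by
    letI := Classical.decRel G.Adj
    exact gOf_fOf G

/-! ### Generic product-measure machinery -/

def W (p : ℝ) {α : Type*} [Fintype α] (f : α → Bool) : ℝ :=
  ∏ e, if f e then p else 1 - p

lemma master {α : Type*} [Fintype α] [DecidableEq α] (G : α → Bool → ℝ) :
    ∑ f : α → Bool, ∏ e, G e (f e) = ∏ e, (G e true + G e false) := by
  have h := Finset.prod_univ_sum (t := fun _ : α => (Finset.univ : Finset Bool))
    (f := fun e b => G e b)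
  rw [Fintype.piFinset_univ] at h
  rw [← h]
  exact Finset.prod_congr rfl fun e _ => by simp [Fintype.sum_bool]

lemma sum_W (p : ℝ) {α : Type*} [Fintype α] [DecidableEq α] : ∑ f : α → Bool, W p f = 1 := by
  have h := master (α := α) (fun _ b => if b then p else 1 - p)
  beta_reduce at h
  unfold W
  rw [h]
  simp

def DepOn {α : Type*} (S : Set α) (φ : (α → Bool) → ℝ) : Prop :=
  ∀ f g, (∀ e ∈ S, f e = g e) → φ f = φ g

lemma DepOn.mono {α : Type*} {S T : Set α} {φ : (α → Bool) → ℝ} (h : DepOn S φ) (hST : S ⊆ T) :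
    DepOn T φ := fun f g hfg => h f g fun e he => hfg e (hST he)

lemma split {α : Type*} [Fintype α] [DecidableEq α] (p : ℝ) (S : Set α) [DecidablePred (· ∈ S)]
    (φ ψ : (α → Bool) → ℝ) (hφ : DepOn S φ) (hψ : DepOn Sᶜ ψ) :
    ∑ f : α → Bool, W p f * (φ f * ψ f)
      = (∑ f : α → Bool, W p f * φ f) * (∑ f : α → Bool, W p f * ψ f) := by
  classical
  set E := (Equiv.piEquivPiSubtypeProd (· ∈ S) (fun _ => Bool)).symm with hE
  have hsum : ∀ F : (α → Bool) → ℝ, ∑ f : α → Bool, F f = ∑ q, F (E q) :=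
    fun F => (Equiv.sum_comp E F).symm
  have hWE : ∀ q, W p (E q) = W p q.1 * W p q.2 := by
    rintro ⟨g, h⟩
    rw [show W p (E (g, h)) = ∏ x : α, (if (E (g,h)) x then p else 1 - p) from rfl,
      ← Fintype.prod_subtype_mul_prod_subtype (· ∈ S)
        (fun x => if (E (g,h)) x then p else 1 - p)]
    congr 1
    · exact Finset.prod_congr rfl fun i _ => by
        simp [hE, Equiv.piEquivPiSubtypeProd, i.2]
    · exact Finset.prod_congr rfl fun i _ => by
        simp [hE, Equiv.piEquivPiSubtypeProd, i.2]
  have hφE : ∀ g h, φ (E (g, h)) = φ (E (g, fun _ => false)) := fun g h =>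
    hφ _ _ fun e he => by simp [hE, Equiv.piEquivPiSubtypeProd, he]
  have hψE : ∀ g h, ψ (E (g, h)) = ψ (E (fun _ => false, h)) := fun g h =>
    hψ _ _ fun e he => by
      have hne : e ∉ S := he
      simp [hE, Equiv.piEquivPiSubtypeProd, hne]
  rw [hsum (fun f => W p f * (φ f * ψ f)), hsum (fun f => W p f * φ f),
    hsum (fun f => W p f * ψ f)]
  rw [Fintype.sum_prod_type, Fintype.sum_prod_type, Fintype.sum_prod_type]
  have L1 : ∀ g h, W p (E (g,h)) * (φ (E (g,h)) * ψ (E (g,h)))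
      = (W p g * φ (E (g, fun _ => false))) * (W p h * ψ (E (fun _ => false, h))) := by
    intro g h; rw [hWE, hφE, hψE]; ring
  have L2 : ∀ g h, W p (E (g,h)) * φ (E (g,h))
      = (W p g * φ (E (g, fun _ => false))) * W p h := by
    intro g h; rw [hWE, hφE]; ring
  have L3 : ∀ g h, W p (E (g,h)) * ψ (E (g,h))
      = W p g * (W p h * ψ (E (fun _ => false, h))) := by
    intro g h; rw [hWE, hψE]; ring
  calc ∑ g, ∑ h, W p (E (g,h)) * (φ (E (g,h)) * ψ (E (g,h)))
      = (∑ g, W p g * φ (E (g, fun _ => false)))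
        * (∑ h, W p h * ψ (E (fun _ => false, h))) := by
        rw [Finset.sum_mul_sum]
        exact Finset.sum_congr rfl fun g _ => Finset.sum_congr rfl fun h _ => L1 g h
    _ = (∑ g, ∑ h, W p (E (g,h)) * φ (E (g,h))) * (∑ g, ∑ h, W p (E (g,h)) * ψ (E (g,h))) := by
        have e2 : (∑ g, ∑ h, W p (E (g,h)) * φ (E (g,h)))
            = (∑ g, W p g * φ (E (g, fun _ => false))) := by
          rw [Finset.sum_congr rfl fun g _ => Finset.sum_congr rfl fun h _ => L2 g h]
          refine Finset.sum_congr rfl fun g _ => ?_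
          rw [← Finset.mul_sum, sum_W, mul_one]
        have e3 : (∑ g, ∑ h, W p (E (g,h)) * ψ (E (g,h)))
            = (∑ h, W p h * ψ (E (fun _ => false, h))) := by
          rw [Finset.sum_congr rfl fun g _ => Finset.sum_congr rfl fun h _ => L3 g h]
          rw [Finset.sum_comm]
          refine Finset.sum_congr rfl fun h _ => ?_
          rw [← Finset.sum_mul, sum_W, one_mul]
        rw [e2, e3]


lemma multi {α ι : Type*} [Fintype α] [DecidableEq α] (p : ℝ) (s : Finset ι)
    (S : ι → Set α) (φ : ι → (α → Bool) → ℝ)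
    (hdep : ∀ i ∈ s, DepOn (S i) (φ i))
    (hdisj : ∀ i ∈ s, ∀ j ∈ s, i ≠ j → Disjoint (S i) (S j)) :
    ∑ f : α → Bool, W p f * ∏ i ∈ s, φ i f
      = ∏ i ∈ s, ∑ f : α → Bool, W p f * φ i f := by
  classical
  induction s using Finset.induction_on with
  | empty => simp [sum_W]
  | @insert a t ha ih =>
    rw [Finset.prod_insert ha]
    have key : ∑ f : α → Bool, W p f * (φ a f * ∏ i ∈ t, φ i f)
        = (∑ f : α → Bool, W p f * φ a f) * (∑ f : α → Bool, W p f * ∏ i ∈ t, φ i f) := by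
      apply split p (S a)
      · exact hdep a (Finset.mem_insert_self a t)
      · intro f g hfg
        refine Finset.prod_congr rfl fun i hi => ?_
        refine hdep i (Finset.mem_insert_of_mem hi) f g fun e he => ?_
        refine hfg e ?_
        have hd := hdisj a (Finset.mem_insert_self a t) i (Finset.mem_insert_of_mem hi)
          (by rintro rfl; exact ha hi)
        exact fun hea => Set.disjoint_right.mp hd he hea
    rw [Finset.sum_congr rfl fun f _ => by rw [Finset.prod_insert ha], key,
      ih (fun i hi => hdep i (Finset.mem_insert_of_mem hi))
        (fun i hi j hj hij => hdisj i (Finset.mem_insert_of_mem hi) j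
          (Finset.mem_insert_of_mem hj) hij)]

lemma ind_forall {B : Type*} (s : Finset B) (P : B → Prop) [DecidablePred P] :
    (if (∀ b ∈ s, P b) then (1 : Real) else 0) = s.prod fun b => if P b then (1 : Real) else 0 := by
  by_cases h : ∀ b ∈ s, P b
  · rw [if_pos h]
    exact (Finset.prod_eq_one fun b hb => if_pos (h b hb)).symm
  · rw [if_neg h]
    push_neg at h
    obtain ⟨b, hb, hPb⟩ := h
    exact (Finset.prod_eq_zero hb (show (if P b then (1:Real) else 0) = 0 from if_neg hPb)).symm

lemma ind_forall_false {B : Type*} (s : Finset B) (g : B → Bool) :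
    (if (∀ b ∈ s, g b = false) then (1 : Real) else 0)
      = s.prod fun b => if g b then (0:Real) else 1 := by
  by_cases h : ∀ b ∈ s, g b = false
  · rw [if_pos h]
    exact (Finset.prod_eq_one fun b hb => by rw [h b hb]; simp).symm
  · rw [if_neg h]
    push_neg at h
    obtain ⟨b, hb, hgb⟩ := h
    have hgb' : g b = true := by simpa using hgb
    exact (Finset.prod_eq_zero hb (by rw [hgb']; simp)).symm

lemma exp_prod_edges (p : Real) {X : Type*} [Fintype X] [DecidableEq X]
    (s : Finset X) (H : X -> Bool -> Real) :
    (Finset.univ.sum fun f : X -> Bool => W p f * s.prod fun e => H e (f e))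
      = s.prod fun e => (p * H e true + (1 - p) * H e false) := by
  have key : ∀ f : X -> Bool, W p f * (s.prod fun e => H e (f e))
      = Finset.univ.prod fun e =>
          ((if f e then p else 1 - p) * (if e ∈ s then H e (f e) else 1)) := by
    intro f
    rw [Finset.prod_mul_distrib]
    congr 1
    have h2 : (s.prod fun e => H e (f e)) = s.prod fun e => (if e ∈ s then H e (f e) else 1) :=
      Finset.prod_congr rfl fun e he => by rw [if_pos he]
    rw [h2]
    exact Finset.prod_subset (Finset.subset_univ s) fun x _ hx => if_neg hx
  refine (Finset.sum_congr rfl fun f _ => key f).trans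
    ((master (fun e b => (if b then p else 1 - p) * (if e ∈ s then H e b else 1))).trans ?_)
  refine (Finset.prod_subset (Finset.subset_univ s) fun x _ hx => by simp [hx]).symm.trans ?_
  exact Finset.prod_congr rfl fun x hx => by simp [hx]

lemma exp_prod_img (p : Real) {X B : Type*} [Fintype X] [DecidableEq X] [DecidableEq B]
    [Nonempty B] (t : Finset B) (eps : B -> X) (hinj : Set.InjOn eps t) (H : B -> Bool -> Real) :
    (Finset.univ.sum fun f : X -> Bool => W p f * t.prod fun d => H d (f (eps d)))
      = t.prod fun d => (p * H d true + (1 - p) * H d false) := by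
  classical
  set rho : X -> B := Function.invFunOn eps t with hrho
  have hre : ∀ d ∈ t, rho (eps d) = d := fun d hd => hinj.leftInvOn_invFunOn hd
  have himg : ∀ (G : B -> Real), ((t.image eps).prod fun e => G (rho e)) = t.prod G := by
    intro G
    rw [Finset.prod_image (fun x hx y hy hxy => hinj hx hy hxy)]
    exact Finset.prod_congr rfl fun d hd => by rw [hre d hd]
  have key : ∀ f : X -> Bool, (t.prod fun d => H d (f (eps d)))
      = (t.image eps).prod fun e => H (rho e) (f e) := by
    intro f
    rw [Finset.prod_image (fun x hx y hy hxy => hinj hx hy hxy)]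
    exact (Finset.prod_congr rfl fun d hd => by rw [hre d hd]).symm
  refine (Finset.sum_congr rfl fun f _ => by rw [key f]).trans
    ((exp_prod_edges p (t.image eps) (fun e b => H (rho e) b)).trans ?_)
  exact himg (fun d => p * H d true + (1 - p) * H d false)

lemma exp_exists_img (p : Real) {X B : Type*} [Fintype X] [DecidableEq X] [DecidableEq B]
    [Nonempty B] (t : Finset B) (eps : B -> X) (hinj : Set.InjOn eps t) :
    (Finset.univ.sum fun f : X -> Bool =>
        W p f * (if (∃ d ∈ t, f (eps d) = true) then (1 : Real) else 0))
      = 1 - (1 - p) ^ t.card := by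
  classical
  have key : ∀ f : X -> Bool, (if (∃ d ∈ t, f (eps d) = true) then (1 : Real) else 0)
      = 1 - t.prod fun d => (if f (eps d) then (0:Real) else 1) := by
    intro f
    rw [← ind_forall_false t (fun d => f (eps d))]
    by_cases h : ∀ d ∈ t, f (eps d) = false
    · rw [if_pos h, if_neg, sub_self]
      rintro ⟨d, hd, hfd⟩
      rw [h d hd] at hfd
      exact Bool.false_ne_true hfd
    · push_neg at h
      obtain ⟨d, hd, hfd⟩ := h
      rw [if_pos ⟨d, hd, by simpa using hfd⟩, if_neg, sub_zero]
      intro hall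
      exact hfd (hall d hd)
  refine (Finset.sum_congr rfl fun f _ => by rw [key f]).trans ?_
  have lin : (Finset.univ.sum fun f : X -> Bool =>
      W p f * (1 - t.prod fun d => (if f (eps d) then (0:Real) else 1)))
      = (Finset.univ.sum fun f : X -> Bool => W p f)
        - Finset.univ.sum fun f : X -> Bool =>
            W p f * t.prod fun d => (if f (eps d) then (0:Real) else 1) := by
    rw [← Finset.sum_sub_distrib]
    exact Finset.sum_congr rfl fun f _ => by ring
  rw [lin, sum_W]
  congr 1
  refine (exp_prod_img p t eps hinj (fun _ b => if b then (0:Real) else 1)).trans ?_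
  have h1 : (t.prod fun _ => ((1:Real) - p)) = (1 - p) ^ t.card := Finset.prod_const _
  refine Eq.trans ?_ h1
  exact Finset.prod_congr rfl fun d _ => by norm_num

lemma ind_filter_eq {B : Type*} [DecidableEq B] (t A : Finset B) (hA : A ⊆ t) (g : B -> Bool) :
    (if t.filter (fun d => g d = true) = A then (1:Real) else 0)
      = t.prod fun d => (if d ∈ A then (if g d then (1:Real) else 0)
          else (if g d then 0 else 1)) := by
  by_cases h : t.filter (fun d => g d = true) = A
  · rw [if_pos h]
    symm
    apply Finset.prod_eq_one
    intro d hd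
    by_cases hdA : d ∈ A
    · have hgd : g d = true := (Finset.mem_filter.mp (h ▸ hdA : d ∈ t.filter _)).2
      rw [if_pos hdA, if_pos hgd]
    · have hgd : g d ≠ true := fun hg => hdA (h ▸ Finset.mem_filter.mpr ⟨hd, hg⟩)
      rw [if_neg hdA, if_neg hgd]
  · rw [if_neg h]
    symm
    obtain ⟨d, hd⟩ : ∃ d, ¬(d ∈ t.filter (fun x => g x = true) ↔ d ∈ A) := by
      by_contra hc
      push_neg at hc
      exact h (Finset.ext fun a => hc a)
    by_cases hdf : d ∈ t.filter (fun x => g x = true)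
    · have hdA : d ∉ A := fun hA' => hd ⟨fun _ => hA', fun _ => hdf⟩
      obtain ⟨hdt, hgd⟩ := Finset.mem_filter.mp hdf
      exact Finset.prod_eq_zero hdt (by rw [if_neg hdA, if_pos hgd])
    · have hdA : d ∈ A := by
        by_contra hA'
        exact hd ⟨fun h' => absurd h' hdf, fun h' => absurd h' hA'⟩
      have hgd : g d ≠ true := fun hg => hdf (Finset.mem_filter.mpr ⟨hA hdA, hg⟩)
      exact Finset.prod_eq_zero (hA hdA) (by rw [if_pos hdA, if_neg hgd])

lemma exp_count_img (p : Real) {X B : Type*} [Fintype X] [DecidableEq X] [DecidableEq B]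
    [Nonempty B] (t : Finset B) (eps : B -> X) (hinj : Set.InjOn eps t) (m : Nat) :
    (Finset.univ.sum fun f : X -> Bool =>
        W p f * (if (t.filter (fun d => f (eps d) = true)).card = m then (1 : Real) else 0))
      = (t.card.choose m : Real) * p ^ m * (1 - p) ^ (t.card - m) := by
  classical
  have stepA : ∀ f : X -> Bool,
      (if (t.filter (fun d => f (eps d) = true)).card = m then (1:Real) else 0)
        = (t.powersetCard m).sum fun A =>
            (if t.filter (fun d => f (eps d) = true) = A then (1:Real) else 0) := by
    intro f
    rw [Finset.sum_ite_eq]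
    have hiff : (t.filter (fun d => f (eps d) = true) ∈ t.powersetCard m)
        ↔ ((t.filter (fun d => f (eps d) = true)).card = m) := by
      rw [Finset.mem_powersetCard]
      exact ⟨fun h => h.2, fun h => ⟨Finset.filter_subset _ _, h⟩⟩
    simp only [hiff]
  refine (Finset.sum_congr rfl fun f _ => by rw [stepA f, Finset.mul_sum]).trans ?_
  rw [Finset.sum_comm]
  have stepB : ∀ A ∈ t.powersetCard m,
      (Finset.univ.sum fun f : X -> Bool =>
        W p f * (if t.filter (fun d => f (eps d) = true) = A then (1:Real) else 0))
      = p ^ m * (1 - p) ^ (t.card - m) := by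
    intro A hA
    rw [Finset.mem_powersetCard] at hA
    obtain ⟨hAt, hAcard⟩ := hA
    have e1 : (Finset.univ.sum fun f : X -> Bool =>
        W p f * (if t.filter (fun d => f (eps d) = true) = A then (1:Real) else 0))
        = Finset.univ.sum fun f : X -> Bool =>
            W p f * t.prod fun d => ((fun d b => if d ∈ A then (if b then (1:Real) else 0)
              else (if b then 0 else 1)) d (f (eps d))) :=
      Finset.sum_congr rfl fun f _ => by rw [ind_filter_eq t A hAt (fun d => f (eps d))]
    rw [e1]
    refine (exp_prod_img p t eps hinj (fun d b => if d ∈ A then (if b then (1:Real) else 0)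
      else (if b then 0 else 1))).trans ?_
    have e2 : (t.prod fun d => (p * (if d ∈ A then (if true then (1:Real) else 0)
        else (if true then 0 else 1)) + (1 - p) * (if d ∈ A then (if false then (1:Real) else 0)
        else (if false then 0 else 1))))
        = t.prod fun d => (if d ∈ A then p else 1 - p) := by
      refine Finset.prod_congr rfl fun d _ => ?_
      by_cases hdA : d ∈ A <;> simp [hdA]
    refine e2.trans ?_
    rw [Finset.prod_ite, Finset.prod_const, Finset.prod_const]
    congr 2
    · rw [Finset.filter_mem_eq_inter, Finset.inter_eq_right.mpr hAt, hAcard]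
    · rw [← hAcard, ← Finset.card_sdiff_of_subset hAt]
      congr 1
      ext x
      simp only [Finset.mem_filter, Finset.mem_sdiff]
  rw [Finset.sum_congr rfl stepB, Finset.sum_const, Finset.card_powersetCard, nsmul_eq_mul]
  ring


variable {u v : Fin n}

def eps (huv : u ≠ v) (w d : Fin n) : ET n :=
  if h : w = d then et u v huv else et w d h

lemma adj_iff (huv : u ≠ v) (f : ET n → Bool) (w d : Fin n) (h : w ≠ d) :
    (gOf f).Adj w d ↔ f (eps huv w d) = true := by
  rw [eps, dif_neg h]
  exact ⟨fun x => x.2, fun hf => ⟨h, hf⟩⟩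

lemma eps_injOn (huv : u ≠ v) (w : Fin n) (D : Finset (Fin n)) (hw : w ∉ D) :
    Set.InjOn (eps huv w) ↑D := by
  intro d1 h1 d2 h2 heq
  rw [Finset.mem_coe] at h1 h2
  have hw1 : w ≠ d1 := fun h => hw (h ▸ h1)
  have hw2 : w ≠ d2 := fun h => hw (h ▸ h2)
  rw [eps, dif_neg hw1, eps, dif_neg hw2] at heq
  have hval : s(w, d1) = s(w, d2) := congrArg Subtype.val heq
  exact Sym2.congr_right.mp hval

lemma eps_disj (huv : u ≠ v) (D : Finset (Fin n)) (w w' : Fin n)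
    (hw : w ∉ D) (hw' : w' ∉ D) (hne : w ≠ w') :
    Disjoint (↑(D.image (eps huv w)) : Set (ET n)) ↑(D.image (eps huv w')) := by
  rw [Set.disjoint_left]
  rintro e he he'
  rw [Finset.mem_coe, Finset.mem_image] at he he'
  obtain ⟨d1, hd1, he1⟩ := he
  obtain ⟨d2, hd2, he2⟩ := he'
  have hw1 : w ≠ d1 := fun h => hw (h ▸ hd1)
  have hw2 : w' ≠ d2 := fun h => hw' (h ▸ hd2)
  rw [eps, dif_neg hw1] at he1
  rw [eps, dif_neg hw2] at he2
  have hval : s(w, d1) = s(w', d2) := by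
    have := he1.trans he2.symm
    exact congrArg Subtype.val this
  rw [Sym2.eq_iff] at hval
  rcases hval with ⟨h1, h2⟩ | ⟨h1, h2⟩
  · exact hne h1
  · exact hw (h1 ▸ hd2)

lemma addEdge_adj (G : SimpleGraph (Fin n)) (a b : Fin n) :
    (addEdge G u v).Adj a b ↔ G.Adj a b ∨ (a ≠ b ∧ s(a, b) = s(u, v)) := by
  simp only [addEdge, SimpleGraph.sup_adj, SimpleGraph.fromEdgeSet_adj,
    Set.mem_singleton_iff]
  tauto

variable {D : Finset (Fin n)}

lemma domset_iff (huv : u ≠ v) (hv : v ∈ D) (hu : u ∉ D) (G : SimpleGraph (Fin n)) :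
    isDomSet (addEdge G u v) ↑D
      ↔ ∀ w ∈ (Finset.univ \ D).erase u, ∃ d ∈ D, G.Adj w d := by
  constructor
  · intro hdom w hw
    rw [Finset.mem_erase, Finset.mem_sdiff] at hw
    obtain ⟨hwu, -, hwD⟩ := hw
    obtain ⟨d, hd, hadj⟩ := hdom w (by simpa using hwD)
    rw [Finset.mem_coe] at hd
    refine ⟨d, hd, ?_⟩
    rcases (addEdge_adj G d w).mp hadj with h | ⟨hne, hsym⟩
    · exact h.symm
    · exfalso
      rw [Sym2.eq_iff] at hsym
      rcases hsym with ⟨h1, h2⟩ | ⟨h1, h2⟩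
      · exact hu (h1 ▸ hd)
      · exact hwu h2
  · intro hall w hw
    rw [Finset.mem_coe] at hw
    by_cases hwu : w = u
    · subst hwu
      refine ⟨v, by simpa using hv, ?_⟩
      exact (addEdge_adj G v w).mpr (Or.inr ⟨fun h => huv h.symm, Sym2.eq_swap⟩)
    · obtain ⟨d, hd, hadj⟩ := hall w (by
        rw [Finset.mem_erase, Finset.mem_sdiff]
        exact ⟨hwu, Finset.mem_univ w, hw⟩)
      exact ⟨d, by simpa using hd, (addEdge_adj G d w).mpr (Or.inl hadj.symm)⟩

lemma nbr_count (huv : u ≠ v) (hv : v ∈ D) (hu : u ∉ D)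
    (G : SimpleGraph (Fin n)) (j : ℕ) (hj : 1 ≤ j) [DecidableRel G.Adj] :
    (((addEdge G u v).neighborSet u ∩ ↑D).ncard = j)
      ↔ ((D.erase v).filter (fun d => G.Adj u d)).card = j - 1 := by
  have hset : (addEdge G u v).neighborSet u ∩ ↑D
      = insert v ↑((D.erase v).filter (fun d => G.Adj u d)) := by
    ext x
    simp only [Set.mem_inter_iff, SimpleGraph.mem_neighborSet, Set.mem_insert_iff,
      Finset.coe_filter, Set.mem_setOf_eq, Finset.mem_erase, Finset.mem_coe]
    constructor
    · rintro ⟨hadj, hxD⟩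
      by_cases hxv : x = v
      · exact Or.inl hxv
      · refine Or.inr ⟨⟨hxv, hxD⟩, ?_⟩
        rcases (addEdge_adj G u x).mp hadj with h | ⟨hne, hsym⟩
        · exact h
        · exact absurd (Sym2.congr_right.mp hsym) hxv
    · rintro (rfl | ⟨⟨hxv, hxD⟩, hadj⟩)
      · exact ⟨(addEdge_adj G u x).mpr (Or.inr ⟨huv, rfl⟩), hv⟩
      · exact ⟨(addEdge_adj G u x).mpr (Or.inl hadj), hxD⟩
  rw [hset]
  have hvnot : v ∉ (↑((D.erase v).filter (fun d => G.Adj u d)) : Set (Fin n)) := by simp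
  rw [Set.ncard_insert_of_notMem hvnot (Set.toFinite _), Set.ncard_coe_finset]
  omega



def phiDom (huv : u ≠ v) (D : Finset (Fin n)) (w : Fin n) (f : ET n → Bool) : ℝ :=
  if (∃ d ∈ D, f (eps huv w d) = true) then 1 else 0

def phiCnt (huv : u ≠ v) (D : Finset (Fin n)) (j : ℕ) (f : ET n → Bool) : ℝ :=
  if ((D.erase v).filter (fun d => f (eps huv u d) = true)).card = j - 1 then 1 else 0

def phi (huv : u ≠ v) (D : Finset (Fin n)) (j : ℕ) (i : Fin n) : (ET n → Bool) → ℝ :=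
  if i = u then phiCnt huv D j else phiDom huv D i

lemma phi_u (huv : u ≠ v) (D : Finset (Fin n)) (j : ℕ) :
    phi huv D j u = phiCnt huv D j := if_pos rfl

lemma phi_ne (huv : u ≠ v) (D : Finset (Fin n)) (j : ℕ) {i : Fin n} (h : i ≠ u) :
    phi huv D j i = phiDom huv D i := if_neg h

open scoped Classical in
lemma exp_event (p : ℝ) (hn : 2 ≤ n) (k : ℕ) (huv : u ≠ v)
    (hD : D.card = k) (hv : v ∈ D) (hu : u ∉ D) (j : ℕ) (hj1 : 1 ≤ j) :
    (Finset.univ.sum fun f : ET n → Bool => W p f *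
      (if (isDomSet (addEdge (gOf f) u v) ↑D
          ∧ ((addEdge (gOf f) u v).neighborSet u ∩ ↑D).ncard = j) then (1:ℝ) else 0))
    = (1 - (1-p)^k)^(n - k - 1)
        * (((k-1).choose (j-1) : ℝ) * p^(j-1) * (1-p)^((k-1)-(j-1))) := by
  have hnee : Nonempty (Fin n) := ⟨⟨0, by omega⟩⟩
  set Wfin : Finset (Fin n) := (Finset.univ \ D).erase u with hWfin
  have hWfinD : ∀ w ∈ Wfin, w ∉ D := by
    intro w hw
    rw [hWfin, Finset.mem_erase, Finset.mem_sdiff] at hw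
    exact hw.2.2
  have hWfinu : u ∉ Wfin := Finset.notMem_erase u _
  have hchar : ∀ f : ET n → Bool,
      (if (isDomSet (addEdge (gOf f) u v) ↑D
          ∧ ((addEdge (gOf f) u v).neighborSet u ∩ ↑D).ncard = j) then (1:ℝ) else 0)
        = phiCnt huv D j f * Wfin.prod (fun w => phiDom huv D w f) := by
    intro f
    have h1 : (isDomSet (addEdge (gOf f) u v) ↑D)
        ↔ ∀ w ∈ Wfin, ∃ d ∈ D, f (eps huv w d) = true := by
      rw [domset_iff huv hv hu]
      refine forall₂_congr fun w hw => ?_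
      have hwD : w ∉ D := hWfinD w hw
      exact exists_congr fun d => and_congr_right fun hd =>
        adj_iff huv f w d (fun h => hwD (h ▸ hd))
    have h2 : (((addEdge (gOf f) u v).neighborSet u ∩ ↑D).ncard = j)
        ↔ (((D.erase v).filter (fun d => f (eps huv u d) = true)).card = j - 1) := by
      rw [nbr_count huv hv hu (gOf f) j hj1]
      have heq : (D.erase v).filter (fun d => (gOf f).Adj u d)
          = (D.erase v).filter (fun d => f (eps huv u d) = true) := by
        refine Finset.filter_congr fun d hd => ?_
        have hd' : d ∈ D := Finset.mem_of_mem_erase hd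
        exact adj_iff huv f u d (fun h => hu (h ▸ hd'))
      rw [heq]
    rw [if_congr (and_congr h1 h2) rfl rfl]
    by_cases ha : ∀ w ∈ Wfin, ∃ d ∈ D, f (eps huv w d) = true
    · by_cases hb : ((D.erase v).filter (fun d => f (eps huv u d) = true)).card = j - 1
      · rw [if_pos ⟨ha, hb⟩]
        have hc : phiCnt huv D j f = 1 := by rw [phiCnt, if_pos hb]
        have hd2 : Wfin.prod (fun w => phiDom huv D w f) = 1 :=
          Finset.prod_eq_one fun w hw => by rw [phiDom, if_pos (ha w hw)]
        rw [hc, hd2, mul_one]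
      · rw [if_neg (fun h => hb h.2)]
        have hc : phiCnt huv D j f = 0 := by rw [phiCnt, if_neg hb]
        rw [hc, zero_mul]
    · rw [if_neg (fun h => ha h.1)]
      have hex : ∃ w ∈ Wfin, ∀ d ∈ D, f (eps huv w d) ≠ true := by
        by_contra hc
        push_neg at hc
        exact ha fun w hw => hc w hw
      obtain ⟨w, hw, hwex⟩ := hex
      have hzero : phiDom huv D w f = 0 := by
        rw [phiDom, if_neg]
        rintro ⟨d, hd, hfd⟩
        exact hwex d hd hfd
      rw [Finset.prod_eq_zero hw hzero, mul_zero]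
  have hprod : ∀ f : ET n → Bool,
      phiCnt huv D j f * Wfin.prod (fun w => phiDom huv D w f)
        = (insert u Wfin).prod (fun i => phi huv D j i f) := by
    intro f
    rw [Finset.prod_insert hWfinu, phi_u]
    congr 1
    refine Finset.prod_congr rfl fun w hw => ?_
    rw [phi_ne huv D j (by rintro rfl; exact hWfinu hw)]
  have hmulti : (Finset.univ.sum fun f : ET n → Bool =>
      W p f * (insert u Wfin).prod (fun i => phi huv D j i f))
      = (insert u Wfin).prod fun i =>
          Finset.univ.sum fun f : ET n → Bool => W p f * phi huv D j i f := by
    refine multi p (insert u Wfin) (fun i => ↑(D.image (eps huv i))) (phi huv D j) ?_ ?_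
    · intro i hi
      have hiD : i ∉ D := by
        rcases Finset.mem_insert.mp hi with rfl | hi'
        · exact hu
        · exact hWfinD i hi'
      intro f g hfg
      have hval : ∀ d ∈ D, f (eps huv i d) = g (eps huv i d) := by
        intro d hd
        refine hfg _ ?_
        rw [Finset.mem_coe, Finset.mem_image]
        exact ⟨d, hd, rfl⟩
      by_cases hiu : i = u
      · subst hiu
        rw [phi_u, phiCnt, phiCnt]
        have heq : (D.erase v).filter (fun d => f (eps huv i d) = true)
            = (D.erase v).filter (fun d => g (eps huv i d) = true) :=
          Finset.filter_congr fun d hd => by rw [hval d (Finset.mem_of_mem_erase hd)]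
        rw [heq]
      · rw [phi_ne huv D j hiu, phiDom, phiDom]
        have heq : (∃ d ∈ D, f (eps huv i d) = true) ↔ (∃ d ∈ D, g (eps huv i d) = true) :=
          exists_congr fun d => and_congr_right fun hd => by rw [hval d hd]
        rw [if_congr heq rfl rfl]
    · intro i hi i' hi' hne'
      have hiD : i ∉ D := by
        rcases Finset.mem_insert.mp hi with rfl | h
        · exact hu
        · exact hWfinD i h
      have hiD' : i' ∉ D := by
        rcases Finset.mem_insert.mp hi' with rfl | h
        · exact hu
        · exact hWfinD i' h
      exact eps_disj huv D i i' hiD hiD' hne'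
  have hcnt : (Finset.univ.sum fun f : ET n → Bool => W p f * phiCnt huv D j f)
      = ((k-1).choose (j-1) : ℝ) * p^(j-1) * (1-p)^((k-1)-(j-1)) := by
    have hinj : Set.InjOn (eps huv u) ↑(D.erase v) := by
      intro d1 h1 d2 h2 heq
      refine eps_injOn huv u D hu ?_ ?_ heq
      · exact Finset.mem_coe.mpr (Finset.mem_of_mem_erase (Finset.mem_coe.mp h1))
      · exact Finset.mem_coe.mpr (Finset.mem_of_mem_erase (Finset.mem_coe.mp h2))
    have h := exp_count_img p (D.erase v) (eps huv u) hinj (j-1)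
    rw [Finset.card_erase_of_mem hv, hD] at h
    refine Eq.trans ?_ h
    refine Finset.sum_congr rfl fun f _ => ?_
    congr 1
  have hdom : ∀ w ∈ Wfin, (Finset.univ.sum fun f : ET n → Bool => W p f * phiDom huv D w f)
      = 1 - (1-p)^k := by
    intro w hw
    have h := exp_exists_img p D (eps huv w) (eps_injOn huv w D (hWfinD w hw))
    rw [hD] at h
    refine Eq.trans ?_ h
    refine Finset.sum_congr rfl fun f _ => ?_
    congr 1
    by_cases hc : ∃ d ∈ D, f (eps huv w d) = true <;> simp only [phiDom, hc, if_true, if_false]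
  have hWcard : Wfin.card = n - k - 1 := by
    rw [hWfin, Finset.card_erase_of_mem
      (by rw [Finset.mem_sdiff]; exact ⟨Finset.mem_univ u, hu⟩),
      Finset.card_sdiff_of_subset (Finset.subset_univ D), Finset.card_univ, Fintype.card_fin, hD]
  calc (Finset.univ.sum fun f : ET n → Bool => W p f *
      (if (isDomSet (addEdge (gOf f) u v) ↑D
          ∧ ((addEdge (gOf f) u v).neighborSet u ∩ ↑D).ncard = j) then (1:ℝ) else 0))
      = Finset.univ.sum fun f : ET n → Bool =>
          W p f * (insert u Wfin).prod (fun i => phi huv D j i f) := by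
        refine Finset.sum_congr rfl fun f _ => ?_
        rw [hchar f, hprod f]
    _ = (insert u Wfin).prod fun i =>
          Finset.univ.sum fun f : ET n → Bool => W p f * phi huv D j i f := hmulti
    _ = (Finset.univ.sum fun f : ET n → Bool => W p f * phiCnt huv D j f)
        * Wfin.prod (fun w => Finset.univ.sum fun f : ET n → Bool
            => W p f * phiDom huv D w f) := by
        rw [Finset.prod_insert hWfinu]
        congr 1
        · refine Finset.sum_congr rfl fun f _ => ?_
          rw [phi_u]
        · refine Finset.prod_congr rfl fun w hw => ?_
          refine Finset.sum_congr rfl fun f _ => ?_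
          rw [phi_ne huv D j (by rintro rfl; exact hWfinu hw)]
    _ = (((k-1).choose (j-1) : ℝ) * p^(j-1) * (1-p)^((k-1)-(j-1)))
        * (1 - (1-p)^k)^(n-k-1) := by
        rw [hcnt, Finset.prod_congr rfl hdom, Finset.prod_const, hWcard]
    _ = (1 - (1-p)^k)^(n - k - 1)
        * (((k-1).choose (j-1) : ℝ) * p^(j-1) * (1-p)^((k-1)-(j-1))) := by ring

lemma count_D (k : ℕ) (hk1 : 1 ≤ k) (huv : u ≠ v) :
    ((Finset.univ : Finset (Finset (Fin n))).filter
        (fun D : Finset (Fin n) => D.card = k ∧ v ∈ D ∧ u ∉ D)).card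
      = (n-2).choose (k-1) := by
  classical
  have hbase : ((Finset.univ.erase u).erase v).card = n - 2 := by
    rw [Finset.card_erase_of_mem
        (Finset.mem_erase.mpr ⟨fun h => huv h.symm, Finset.mem_univ v⟩),
      Finset.card_erase_of_mem (Finset.mem_univ u), Finset.card_univ, Fintype.card_fin]
    omega
  rw [← hbase, ← Finset.card_powersetCard]
  refine Finset.card_bij' (fun D _ => D.erase v) (fun A _ => insert v A) ?_ ?_ ?_ ?_
  · intro D hD
    rw [Finset.mem_filter] at hD
    obtain ⟨-, hcard, hvD, huD⟩ := hD
    rw [Finset.mem_powersetCard]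
    constructor
    · intro x hx
      rw [Finset.mem_erase] at hx
      exact Finset.mem_erase.mpr ⟨hx.1,
        Finset.mem_erase.mpr ⟨fun h => huD (h ▸ hx.2), Finset.mem_univ x⟩⟩
    · rw [Finset.card_erase_of_mem hvD, hcard]
  · intro A hA
    rw [Finset.mem_powersetCard] at hA
    obtain ⟨hsub, hcard⟩ := hA
    have hvA : v ∉ A := fun h => (Finset.mem_erase.mp (hsub h)).1 rfl
    have huA : u ∉ A := fun h => (Finset.mem_erase.mp (Finset.mem_of_mem_erase (hsub h))).1 rfl
    rw [Finset.mem_filter]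
    refine ⟨Finset.mem_univ _, ?_, Finset.mem_insert_self v A, ?_⟩
    · rw [Finset.card_insert_of_notMem hvA, hcard]
      omega
    · rw [Finset.mem_insert]
      rintro (h | h)
      · exact huv h
      · exact huA h
  · intro D hD
    rw [Finset.mem_filter] at hD
    exact Finset.insert_erase hD.2.2.1
  · intro A hA
    rw [Finset.mem_powersetCard] at hA
    have hvA : v ∉ A := fun h => (Finset.mem_erase.mp (hA.1 h)).1 rfl
    exact Finset.erase_insert hvA

lemma choose_id (n k : ℕ) (hn : 2 ≤ n) (hk1 : 1 ≤ k) (hk2 : k ≤ n - 1) :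
    n * (n-1) * ((n-2).choose (k-1)) = k * (n-k) * n.choose k := by
  have A : n.choose k * k = n * ((n-1).choose (k-1)) := by
    have h := Nat.add_one_mul_choose_eq (n-1) (k-1)
    rw [show n-1+1 = n by omega, show k-1+1 = k by omega] at h
    exact h.symm
  have B : (n-1).choose k * k = (n-1).choose (k-1) * (n-k) := by
    have h := Nat.choose_succ_right_eq (n-1) (k-1)
    rw [show (k-1)+1 = k by omega, show n-1-(k-1) = n-k by omega] at h
    exact h
  have C : (n-1) * ((n-2).choose (k-1)) = (n-1).choose k * k := by
    have h := Nat.add_one_mul_choose_eq (n-2) (k-1)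
    rw [show n-2+1 = n-1 by omega, show k-1+1 = k by omega] at h
    exact h
  calc n*(n-1)*((n-2).choose (k-1)) = n*((n-1)*((n-2).choose (k-1))) := by ring
    _ = n*((n-1).choose k * k) := by rw [C]
    _ = n*((n-1).choose (k-1) * (n-k)) := by rw [B]
    _ = (n * ((n-1).choose (k-1))) * (n-k) := by ring
    _ = (n.choose k * k) * (n-k) := by rw [A]
    _ = k*(n-k)*n.choose k := by ring

lemma sum_recip (p : ℝ) (hp0 : 0 < p) (k : ℕ) (hk : 1 ≤ k) :
    (Finset.Icc 1 k).sum
        (fun j => (((k-1).choose (j-1) : ℝ) * p^(j-1) * (1-p)^((k-1)-(j-1))) / j)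
      = (1 - (1-p)^k) / (k * p) := by
  have hk0 : (k:ℝ) ≠ 0 := Nat.cast_ne_zero.mpr (by omega)
  have hterm : ∀ j ∈ Finset.Icc 1 k,
      (((k-1).choose (j-1):ℝ) * p^(j-1) * (1-p)^((k-1)-(j-1))) / j
        = ((k.choose j : ℝ) * p^j * (1-p)^(k-j)) / (k*p) := by
    intro j hj
    rw [Finset.mem_Icc] at hj
    obtain ⟨hj1, hjk⟩ := hj
    have hidn : k * ((k-1).choose (j-1)) = k.choose j * j := by
      have h := Nat.add_one_mul_choose_eq (k-1) (j-1)
      rw [show k-1+1 = k by omega, show j-1+1 = j by omega] at h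
      exact h
    have hid : (k:ℝ) * ((k-1).choose (j-1)) = (k.choose j : ℝ) * j := by
      exact_mod_cast congrArg (Nat.cast (R := ℝ)) hidn
    have hexp : p ^ j = p * p^(j-1) := by
      conv_lhs => rw [show j = (j-1)+1 by omega]
      rw [pow_succ]
      ring
    have hj0 : (j:ℝ) ≠ 0 := Nat.cast_ne_zero.mpr (by omega)
    have hkp0 : (k:ℝ) * p ≠ 0 := mul_ne_zero hk0 (ne_of_gt hp0)
    rw [show (k-1) - (j-1) = k - j by omega, div_eq_div_iff hj0 hkp0, hexp]
    linear_combination ((1-p)^(k-j) * p^(j-1) * p) * hid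
  rw [Finset.sum_congr rfl hterm, ← Finset.sum_div]
  congr 1
  have hfull : (Finset.range (k+1)).sum
      (fun j => ((k.choose j : ℝ) * p^j * (1-p)^(k-j))) = 1 := by
    calc (Finset.range (k+1)).sum (fun j => ((k.choose j : ℝ) * p^j * (1-p)^(k-j)))
        = (p + (1-p))^k := by
          rw [add_pow]
          exact Finset.sum_congr rfl fun j _ => by ring
      _ = 1 := by norm_num
  have hsplit : (Finset.range (k+1)).sum (fun j => ((k.choose j : ℝ) * p^j * (1-p)^(k-j)))
      = ((k.choose 0 : ℝ) * p^0 * (1-p)^(k-0))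
        + (Finset.Icc 1 k).sum (fun j => ((k.choose j : ℝ) * p^j * (1-p)^(k-j))) := by
    rw [Finset.sum_range_succ', add_comm]
    congr 1
    rw [← Finset.Ico_add_one_right_eq_Icc, Finset.sum_Ico_eq_sum_range,
      show k + 1 - 1 = k from rfl]
    exact Finset.sum_congr rfl fun i _ => by rw [Nat.add_comm 1 i]
  rw [hsplit] at hfull
  have h0 : ((k.choose 0 : ℝ) * p^0 * (1-p)^(k-0)) = (1-p)^k := by norm_num
  rw [h0] at hfull
  linarith


lemma edgeSet_gOf (f : ET n → Bool) :
    (gOf f).edgeSet = Subtype.val '' {e : ET n | f e = true} := by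
  ext e
  induction e using Sym2.ind with
  | _ a b =>
    simp only [SimpleGraph.mem_edgeSet, Set.mem_image, Set.mem_setOf_eq]
    constructor
    · rintro ⟨h, hf⟩
      exact ⟨et a b h, hf, rfl⟩
    · rintro ⟨⟨e1, he1⟩, hf, heq⟩
      have heq' : e1 = s(a,b) := heq
      subst heq'
      have h : a ≠ b := by simpa using he1
      exact ⟨h, hf⟩

lemma erWeight_gOf (p : ℝ) (f : ET n → Bool) : erWeight n p (gOf f) = W p f := by
  classical
  have hcard : (gOf f).edgeSet.ncard
      = (Finset.univ.filter (fun e : ET n => f e = true)).card := by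
    rw [edgeSet_gOf, Set.ncard_image_of_injective _ Subtype.val_injective,
      ← Set.ncard_coe_finset]
    congr 1
    ext e
    simp
  have hcardET : Fintype.card (ET n) = n.choose 2 := by
    rw [Sym2.card_subtype_not_diag, Fintype.card_fin]
  have hsplitc : (Finset.univ.filter (fun e : ET n => ¬ (f e = true))).card
      = n.choose 2 - (Finset.univ.filter (fun e : ET n => f e = true)).card := by
    have htot := Finset.card_filter_add_card_filter_not
      (s := (Finset.univ : Finset (ET n))) (p := fun e : ET n => f e = true)
    rw [Finset.card_univ, hcardET] at htot
    omega
  rw [erWeight, hcard, show W p f = Finset.univ.prod (fun e : ET n => if f e then p else 1-p)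
      from rfl,
    Finset.prod_ite, Finset.prod_const, Finset.prod_const, hsplitc]

end EDaux

/-- The expected damage of a directed pair `(u,v)`:
`E[Σ_{j=1}^{k} D̂_j(u,v)/j] = ((n−k)/(p n (n−1))) f(n,k,p)`. -/
theorem expected_damage (n : ℕ) (hn : 2 ≤ n) (p : ℝ) (hp : p ∈ Set.Ioo (0 : ℝ) 1)
    (k : ℕ) (hk1 : 1 ≤ k) (hk2 : k ≤ n - 1) (u v : Fin n) (huv : u ≠ v) :
    erExp n p (fun G => ∑ j ∈ Finset.Icc 1 k, (dhat G k u v j : ℝ) / j) =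
      ((n : ℝ) - k) / (p * n * ((n : ℝ) - 1)) * fdom n k p := by
  classical
  obtain ⟨hp0, hp1⟩ := hp
  have hkn : k ≤ n := by omega
  -- step 1: transport to functions on edges
  have step1 : erExp n p (fun G => ∑ j ∈ Finset.Icc 1 k, (dhat G k u v j : ℝ) / j)
      = ∑ f : EDaux.ET n → Bool, EDaux.W p f
          * ∑ j ∈ Finset.Icc 1 k, (dhat (EDaux.gOf f) k u v j : ℝ) / j := by
    rw [erExp, ← Equiv.sum_comp (EDaux.grEquiv n)
      (fun G => erWeight n p G * ∑ j ∈ Finset.Icc 1 k, (dhat G k u v j : ℝ) / j)]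
    exact Finset.sum_congr rfl fun f _ => by
      rw [show (EDaux.grEquiv n) f = EDaux.gOf f from rfl, EDaux.erWeight_gOf]
  -- step 2: expand dhat as a sum of indicators over D
  have step2 : ∀ (f : EDaux.ET n → Bool) (j : ℕ), (dhat (EDaux.gOf f) k u v j : ℝ)
      = ∑ D : Finset (Fin n),
          (if (D.card = k ∧ v ∈ D ∧ u ∉ D) then
            (if (isDomSet (addEdge (EDaux.gOf f) u v) ↑D
              ∧ ((addEdge (EDaux.gOf f) u v).neighborSet u ∩ ↑D).ncard = j)
             then (1:ℝ) else 0) else 0) := by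
    intro f j
    rw [dhat, Set.ncard_eq_toFinset_card', Set.toFinset_setOf, Finset.card_filter,
      Nat.cast_sum]
    refine Finset.sum_congr rfl fun D _ => ?_
    by_cases hstat : D.card = k ∧ v ∈ D ∧ u ∉ D
    · by_cases hev : isDomSet (addEdge (EDaux.gOf f) u v) ↑D
          ∧ ((addEdge (EDaux.gOf f) u v).neighborSet u ∩ ↑D).ncard = j
      · rw [if_pos ⟨hstat.1, hstat.2.1, hstat.2.2, hev.1, hev.2⟩, if_pos hstat, if_pos hev]
        norm_num
      · rw [if_neg (fun h => hev ⟨h.2.2.2.1, h.2.2.2.2⟩), if_pos hstat, if_neg hev]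
        norm_num
    · rw [if_neg (fun h => hstat ⟨h.1, h.2.1, h.2.2.1⟩), if_neg hstat]
      norm_num
  -- step 3: swap the sums
  have step3 : (∑ f : EDaux.ET n → Bool, EDaux.W p f
      * ∑ j ∈ Finset.Icc 1 k, (dhat (EDaux.gOf f) k u v j : ℝ) / j)
      = ∑ j ∈ Finset.Icc 1 k,
          (∑ f : EDaux.ET n → Bool, EDaux.W p f * (dhat (EDaux.gOf f) k u v j : ℝ)) / j := by
    calc (∑ f : EDaux.ET n → Bool, EDaux.W p f
        * ∑ j ∈ Finset.Icc 1 k, (dhat (EDaux.gOf f) k u v j : ℝ) / j)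
        = ∑ f : EDaux.ET n → Bool, ∑ j ∈ Finset.Icc 1 k,
            EDaux.W p f * ((dhat (EDaux.gOf f) k u v j : ℝ) / j) :=
          Finset.sum_congr rfl fun f _ => Finset.mul_sum _ _ _
      _ = ∑ j ∈ Finset.Icc 1 k, ∑ f : EDaux.ET n → Bool,
            EDaux.W p f * ((dhat (EDaux.gOf f) k u v j : ℝ) / j) := Finset.sum_comm
      _ = ∑ j ∈ Finset.Icc 1 k,
            (∑ f : EDaux.ET n → Bool, EDaux.W p f * (dhat (EDaux.gOf f) k u v j : ℝ)) / j := by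
          refine Finset.sum_congr rfl fun j _ => ?_
          rw [Finset.sum_div]
          exact Finset.sum_congr rfl fun f _ => by ring
  -- step 4: evaluate the inner expectation for each j
  have step4 : ∀ j ∈ Finset.Icc 1 k,
      (∑ f : EDaux.ET n → Bool, EDaux.W p f * (dhat (EDaux.gOf f) k u v j : ℝ))
        = (((n-2).choose (k-1) : ℕ) : ℝ) * ((1 - (1-p)^k) ^ (n-k-1)
            * (((k-1).choose (j-1) : ℝ) * p^(j-1) * (1-p)^((k-1)-(j-1)))) := by
    intro j hj
    rw [Finset.mem_Icc] at hj
    calc (∑ f : EDaux.ET n → Bool, EDaux.W p f * (dhat (EDaux.gOf f) k u v j : ℝ))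
        = ∑ f : EDaux.ET n → Bool, ∑ D : Finset (Fin n), EDaux.W p f *
            (if (D.card = k ∧ v ∈ D ∧ u ∉ D) then
              (if (isDomSet (addEdge (EDaux.gOf f) u v) ↑D
                ∧ ((addEdge (EDaux.gOf f) u v).neighborSet u ∩ ↑D).ncard = j)
               then (1:ℝ) else 0) else 0) := by
          refine Finset.sum_congr rfl fun f _ => ?_
          rw [step2 f j, Finset.mul_sum]
      _ = ∑ D : Finset (Fin n), ∑ f : EDaux.ET n → Bool, EDaux.W p f *
            (if (D.card = k ∧ v ∈ D ∧ u ∉ D) then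
              (if (isDomSet (addEdge (EDaux.gOf f) u v) ↑D
                ∧ ((addEdge (EDaux.gOf f) u v).neighborSet u ∩ ↑D).ncard = j)
               then (1:ℝ) else 0) else 0) := Finset.sum_comm
      _ = ∑ D : Finset (Fin n),
            (if (D.card = k ∧ v ∈ D ∧ u ∉ D) then (1 - (1-p)^k) ^ (n-k-1)
              * (((k-1).choose (j-1) : ℝ) * p^(j-1) * (1-p)^((k-1)-(j-1))) else 0) := by
          refine Finset.sum_congr rfl fun D _ => ?_
          by_cases hstat : D.card = k ∧ v ∈ D ∧ u ∉ D
          · rw [if_pos hstat]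
            obtain ⟨hDk, hvD, huD⟩ := hstat
            have hsum : (∑ f : EDaux.ET n → Bool, EDaux.W p f *
                (if (D.card = k ∧ v ∈ D ∧ u ∉ D) then
                  (if (isDomSet (addEdge (EDaux.gOf f) u v) ↑D
                    ∧ ((addEdge (EDaux.gOf f) u v).neighborSet u ∩ ↑D).ncard = j)
                   then (1:ℝ) else 0) else 0))
                = ∑ f : EDaux.ET n → Bool, EDaux.W p f *
                    (if (isDomSet (addEdge (EDaux.gOf f) u v) ↑D
                      ∧ ((addEdge (EDaux.gOf f) u v).neighborSet u ∩ ↑D).ncard = j)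
                     then (1:ℝ) else 0) :=
              Finset.sum_congr rfl fun f _ => by rw [if_pos ⟨hDk, hvD, huD⟩]
            rw [hsum]
            exact EDaux.exp_event (D := D) p hn k huv hDk hvD huD j hj.1
          · rw [if_neg hstat]
            have hz : ∀ f : EDaux.ET n → Bool, EDaux.W p f *
                (if (D.card = k ∧ v ∈ D ∧ u ∉ D) then
                  (if (isDomSet (addEdge (EDaux.gOf f) u v) ↑D
                    ∧ ((addEdge (EDaux.gOf f) u v).neighborSet u ∩ ↑D).ncard = j)
                   then (1:ℝ) else 0) else 0) = 0 :=
              fun f => by rw [if_neg hstat, mul_zero]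
            rw [Finset.sum_congr rfl fun f _ => hz f, Finset.sum_const_zero]
      _ = (((n-2).choose (k-1) : ℕ) : ℝ) * ((1 - (1-p)^k) ^ (n-k-1)
            * (((k-1).choose (j-1) : ℝ) * p^(j-1) * (1-p)^((k-1)-(j-1)))) := by
          rw [Finset.sum_ite, Finset.sum_const, Finset.sum_const_zero, add_zero,
            nsmul_eq_mul, ← EDaux.count_D k hk1 huv]
  -- assemble
  rw [step1, step3, Finset.sum_congr rfl fun j hj => by rw [step4 j hj]]
  have hpull : (∑ j ∈ Finset.Icc 1 k, ((((n-2).choose (k-1) : ℕ) : ℝ) * ((1 - (1-p)^k) ^ (n-k-1)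
      * (((k-1).choose (j-1) : ℝ) * p^(j-1) * (1-p)^((k-1)-(j-1))))) / j)
      = (((n-2).choose (k-1) : ℕ) : ℝ) * (1 - (1-p)^k) ^ (n-k-1)
        * ∑ j ∈ Finset.Icc 1 k,
            (((k-1).choose (j-1) : ℝ) * p^(j-1) * (1-p)^((k-1)-(j-1))) / j := by
    rw [Finset.mul_sum]
    exact Finset.sum_congr rfl fun j _ => by ring
  rw [hpull, EDaux.sum_recip p hp0 k hk1, fdom]
  have hq' : ((1 - (1-p)^k) ^ (n-k-1)) * ((1 - (1-p)^k) / ((k:ℝ) * p))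
      = (1 - (1-p)^k) ^ (n-k) / ((k:ℝ)*p) := by
    have hnk : (1 - (1-p)^k) ^ (n-k) = (1 - (1-p)^k) ^ (n-k-1) * (1 - (1-p)^k) := by
      rw [← pow_succ]
      congr 1
      omega
    rw [hnk]
    ring
  rw [mul_assoc, hq']
  have hidR : ((n:ℝ) * ((n:ℝ)-1)) * (((n-2).choose (k-1) : ℕ) : ℝ)
      = (k:ℝ) * ((n:ℝ)-(k:ℝ)) * (n.choose k : ℝ) := by
    have hid := EDaux.choose_id n k hn hk1 hk2
    have hcast := congrArg (Nat.cast (R := ℝ)) hid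
    have h1 : ((n - 1 : ℕ) : ℝ) = (n:ℝ) - 1 := by
      rw [Nat.cast_sub (by omega : 1 ≤ n)]
      norm_num
    have h2 : ((n - k : ℕ) : ℝ) = (n:ℝ) - k := by
      rw [Nat.cast_sub hkn]
    push_cast [h1, h2] at hcast
    linarith [hcast]
  have hn0 : (n:ℝ) ≠ 0 := Nat.cast_ne_zero.mpr (by omega)
  have hn1 : (n:ℝ) - 1 ≠ 0 := by
    have : (2:ℝ) ≤ (n:ℝ) := by exact_mod_cast hn
    linarith
  have hk0 : (k:ℝ) ≠ 0 := Nat.cast_ne_zero.mpr (by omega)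
  have hp0' : p ≠ 0 := ne_of_gt hp0
  have e1 : (((n-2).choose (k-1) : ℕ) : ℝ) * ((1 - (1-p)^k) ^ (n-k) / ((k:ℝ)*p))
      = ((1 - (1-p)^k) ^ (n-k) * (((n-2).choose (k-1) : ℕ) : ℝ)) / ((k:ℝ)*p) := by
    ring
  have e2 : ((n:ℝ)-k)/(p*n*((n:ℝ)-1)) * ((n.choose k:ℝ) * (1 - (1-p)^k) ^ (n-k))
      = ((1 - (1-p)^k) ^ (n-k) * (((n:ℝ)-k) * (n.choose k:ℝ))) / (p*((n:ℝ)*((n:ℝ)-1))) := by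
    ring
  rw [e1, e2, div_eq_div_iff (mul_ne_zero hk0 hp0')
    (mul_ne_zero hp0' (mul_ne_zero hn0 hn1))]
  linear_combination ((1 - (1-p)^k) ^ (n-k) * p) * hidR
end
end

section
/- Let G = (V,E) be a finite simple graph and let r be a positive integer. For an ordered pair (u,v) of distinct vertices of V and j ≥ 1, let D̂_j(u,v) be the number of sets D ⊆ V of cardinality r with v ∈ D and u ∉ D that are dominating sets of G+uv (the graph G with the edge uv added, if not already present) and such that u has exactly j neighbours in D in G+uv; let Z(u,v) = Σ_{j=1}^{r} D̂_j(u,v)/j. For a set A of unordered pairs of distinct vertices, let Z_A = Σ_{{u,v}∈A} (Z(u,v) + Z(v,u)), and let Y_A be the number of dominating sets of G of cardinality r that are not dominating sets of G−A (the graph G with all edges belonging to A removed). Then Y_A ≤ Z_A. -/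
open Filter Real Topology

/-- Auxiliary: the defining condition of `dhat`. -/
def dhatCond {V : Type*} [Fintype V] (G : SimpleGraph V) (r : ℕ) (u v : V)
    (j : ℕ) (D : Finset V) : Prop :=
  D.card = r ∧ v ∈ D ∧ u ∉ D ∧ isDomSet (addEdge G u v) ↑D ∧
    ((addEdge G u v).neighborSet u ∩ ↑D).ncard = j

open Classical in
/-- Auxiliary: contribution of a single set `D` to `damage G r u v`. -/
noncomputable def contribD {V : Type*} [Fintype V] (G : SimpleGraph V) (r : ℕ)
    (D : Finset V) (u v : V) : ℝ :=
  ∑ j ∈ Finset.Icc 1 r, if dhatCond G r u v j D then ((j : ℝ))⁻¹ else 0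

lemma contribD_nonneg {V : Type*} [Fintype V] (G : SimpleGraph V) (r : ℕ)
    (D : Finset V) (u v : V) : 0 ≤ contribD G r D u v := by
  apply Finset.sum_nonneg
  intro j _
  split <;> positivity

open Classical in
lemma ncard_setOf_eq_sum {α : Type*} [Fintype α] (P : α → Prop) :
    {x | P x}.ncard = ∑ x, if P x then 1 else 0 := by
  classical
  rw [show {x | P x} = ↑(Finset.univ.filter P) by simp, Set.ncard_coe_finset,
    Finset.card_filter]

lemma damage_eq_sum_contribD {V : Type*} [Fintype V] (G : SimpleGraph V) (r : ℕ)
    (u v : V) : damage G r u v = ∑ D : Finset V, contribD G r D u v := by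
  classical
  unfold damage contribD
  rw [Finset.sum_comm]
  apply Finset.sum_congr rfl
  intro j _
  have : dhat G r u v j = ∑ D : Finset V, if dhatCond G r u v j D then 1 else 0 :=
    ncard_setOf_eq_sum _
  rw [this]
  push_cast
  rw [Finset.sum_div]
  apply Finset.sum_congr rfl
  intro D _
  split <;> simp [div_eq_mul_inv]

lemma addEdge_eq_self {V : Type*} (G : SimpleGraph V) {u v : V} (h : G.Adj u v) :
    addEdge G u v = G := by
  unfold addEdge
  rw [sup_eq_left]
  intro a b hab
  rw [SimpleGraph.fromEdgeSet_adj, Set.mem_singleton_iff, Sym2.eq_iff] at hab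
  rcases hab.1 with ⟨rfl, rfl⟩ | ⟨rfl, rfl⟩
  · exact h
  · exact h.symm

lemma one_le_contribD_sum {V : Type*} [Fintype V] (G : SimpleGraph V) (r : ℕ)
    (A : Finset (Sym2 V)) (D : Finset V) (hcard : D.card = r) (hdom : isDomSet G ↑D)
    (hbad : ¬ isDomSet (G.deleteEdges (↑A : Set (Sym2 V))) ↑D) :
    1 ≤ ∑ e ∈ A, Sym2.lift
      ⟨fun u v => contribD G r D u v + contribD G r D v u, fun u v => add_comm _ _⟩ e := by
  classical
  rw [isDomSet] at hbad
  push_neg at hbad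
  obtain ⟨u, hu, hund⟩ := hbad
  set J : Finset V := D.filter (fun w => G.Adj u w) with hJ
  have hJsub : J ⊆ D := Finset.filter_subset _ _
  have hJne : J.Nonempty := by
    obtain ⟨w, hw, hadj⟩ := hdom u hu
    exact ⟨w, Finset.mem_filter.2 ⟨hw, hadj.symm⟩⟩
  have hj0pos : 0 < J.card := Finset.card_pos.2 hJne
  have hj0le : J.card ≤ r := hcard ▸ Finset.card_le_card hJsub
  -- every v ∈ J gives an edge of A
  have hedge : ∀ v ∈ J, s(u, v) ∈ A := by
    intro v hv
    obtain ⟨hvD, hadj⟩ := Finset.mem_filter.1 hv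
    have := hund v hvD
    rw [SimpleGraph.deleteEdges_adj] at this
    push_neg at this
    have h2 := this hadj.symm
    rwa [Sym2.eq_swap, Finset.mem_coe] at h2
  -- the condition holds at j = J.card for each v ∈ J
  have hcond : ∀ v ∈ J, dhatCond G r u v J.card D := by
    intro v hv
    obtain ⟨hvD, hadj⟩ := Finset.mem_filter.1 hv
    have hAE : addEdge G u v = G := addEdge_eq_self G hadj
    refine ⟨hcard, hvD, hu, ?_, ?_⟩
    · rw [hAE]; exact hdom
    · rw [hAE]
      have : G.neighborSet u ∩ ↑D = ↑J := by
        ext w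
        simp [hJ, SimpleGraph.mem_neighborSet, and_comm]
      rw [this, Set.ncard_coe_finset]
  -- injectivity of v ↦ s(u,v) on J
  have hinj : ∀ v ∈ J, ∀ w ∈ J, s(u, v) = s(u, w) → v = w := by
    intro v hv w hw h
    rw [Sym2.eq_iff] at h
    rcases h with ⟨-, h⟩ | ⟨h1, h2⟩
    · exact h
    · exact absurd h2 (Finset.mem_filter.1 hv).2.ne'
  -- lower bound
  have hsub : J.image (fun v => s(u, v)) ⊆ A := by
    intro e he
    obtain ⟨v, hv, rfl⟩ := Finset.mem_image.1 he
    exact hedge v hv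
  have hnn : ∀ e ∈ A, 0 ≤ Sym2.lift
      ⟨fun u v => contribD G r D u v + contribD G r D v u, fun u v => add_comm _ _⟩ e := by
    intro e _
    induction e using Sym2.inductionOn with
    | hf a b => simpa using add_nonneg (contribD_nonneg G r D a b) (contribD_nonneg G r D b a)
  calc (1 : ℝ) = J.card * (J.card : ℝ)⁻¹ := by
        rw [mul_inv_cancel₀]
        exact_mod_cast hj0pos.ne'
    _ = ∑ v ∈ J, (J.card : ℝ)⁻¹ := by rw [Finset.sum_const, nsmul_eq_mul]
    _ ≤ ∑ v ∈ J, Sym2.lift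
        ⟨fun u v => contribD G r D u v + contribD G r D v u, fun u v => add_comm _ _⟩
        s(u, v) := by
        apply Finset.sum_le_sum
        intro v hv
        rw [Sym2.lift_mk]
        have h1 : (J.card : ℝ)⁻¹ ≤ contribD G r D u v := by
          unfold contribD
          have := Finset.single_le_sum (f := fun j => if dhatCond G r u v j D
              then ((j : ℝ))⁻¹ else 0)
            (fun j _ => by by_cases h : dhatCond G r u v j D <;> simp [h] <;> positivity)
            (Finset.mem_Icc.2 ⟨hj0pos, hj0le⟩)
          simpa [hcond v hv] using this
        linarith [contribD_nonneg G r D v u]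
    _ = ∑ e ∈ J.image (fun v => s(u, v)), Sym2.lift
        ⟨fun u v => contribD G r D u v + contribD G r D v u, fun u v => add_comm _ _⟩ e :=
        (Finset.sum_image hinj).symm
    _ ≤ _ := Finset.sum_le_sum_of_subset_of_nonneg hsub (fun e he _ => hnn e he)

/-- Deterministic damage bound: for any finite graph `G`, any `r > 0` and any
set `A` of unordered pairs of distinct vertices, the number `Y_A` of dominating sets of `G` of
cardinality `r` that are no longer dominating in `G − A` is at most the total damage
`Z_A = Σ_{{u,v}∈A} (Z(u,v) + Z(v,u))`. -/
theorem damage_bound {V : Type*} [Fintype V] (G : SimpleGraph V) (r : ℕ) (hr : 0 < r)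
    (A : Finset (Sym2 V)) (hA : ∀ e ∈ A, ¬e.IsDiag) :
    ({D : Finset V | D.card = r ∧ isDomSet G ↑D ∧
        ¬isDomSet (G.deleteEdges (↑A : Set (Sym2 V))) ↑D}.ncard : ℝ) ≤
      ∑ e ∈ A, Sym2.lift
        ⟨fun u v => damage G r u v + damage G r v u, fun u v => add_comm _ _⟩ e := by
  classical
  have hRHS : ∑ e ∈ A, Sym2.lift
      ⟨fun u v => damage G r u v + damage G r v u, fun u v => add_comm _ _⟩ e =
      ∑ D : Finset V, ∑ e ∈ A, Sym2.lift
        ⟨fun u v => contribD G r D u v + contribD G r D v u, fun u v => add_comm _ _⟩ e := by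
    rw [Finset.sum_comm]
    apply Finset.sum_congr rfl
    intro e _
    induction e using Sym2.inductionOn with
    | hf a b =>
      simp only [Sym2.lift_mk, damage_eq_sum_contribD, ← Finset.sum_add_distrib]
  rw [hRHS]
  set P : Finset V → Prop := fun D => D.card = r ∧ isDomSet G ↑D ∧
      ¬isDomSet (G.deleteEdges (↑A : Set (Sym2 V))) ↑D with hP
  have hLHS : ({D : Finset V | P D}.ncard : ℝ) = ∑ D ∈ Finset.univ.filter P, (1 : ℝ) := by
    rw [show {D : Finset V | P D} = ↑(Finset.univ.filter P) by simp, Set.ncard_coe_finset]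
    simp
  rw [hLHS]
  calc ∑ D ∈ Finset.univ.filter P, (1 : ℝ)
      ≤ ∑ D ∈ Finset.univ.filter P, ∑ e ∈ A, Sym2.lift
        ⟨fun u v => contribD G r D u v + contribD G r D v u, fun u v => add_comm _ _⟩ e := by
        apply Finset.sum_le_sum
        intro D hD
        obtain ⟨h1, h2, h3⟩ := (Finset.mem_filter.1 hD).2
        exact one_le_contribD_sum G r A D h1 h2 h3
    _ ≤ ∑ D : Finset V, ∑ e ∈ A, Sym2.lift
        ⟨fun u v => contribD G r D u v + contribD G r D v u, fun u v => add_comm _ _⟩ e := by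
        apply Finset.sum_le_sum_of_subset_of_nonneg (Finset.filter_subset _ _)
        intro D _ _
        apply Finset.sum_nonneg
        intro e _
        induction e using Sym2.inductionOn with
        | hf a b =>
          simpa using add_nonneg (contribD_nonneg G r D a b) (contribD_nonneg G r D b a)
end
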